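/- arXiv:1406.1330 — 15 statements merged into one kernel-verified Lean document; each statement's English description precedes it below -/
import Mathlib

section
/- Let θ_0, …, θ_{n−1} and φ be elements of R. For an invertible element a of R define the Darboux map G_a(ψ) = D(ψ) − D(a)a⁻¹ψ. Define recursively θ[0] = θ_0 and, for 1 ≤ k ≤ n−1, θ[k] = G_{θ[k−1]} ∘ ⋯ ∘ G_{θ[0]}(θ_k), and set φ[n] = G_{θ[n−1]} ∘ ⋯ ∘ G_{θ[0]}(φ). Assume every θ[k] (0 ≤ k ≤ n−1) is invertible in R and that the n×n matrix W over R with entries W_{i,j} = D^i(θ_j) (0 ≤ i, j ≤ n−1) is invertible. Then φ[n] = D^n(φ) − Σ_{j=0}^{n−1} Σ_{i=0}^{n−1} D^n(θ_j)·(W⁻¹)_{j,i}·D^i(φ); that is, φ[n] equals the quasideterminant of the (n+1)×(n+1) matrix (D^i(θ_0), …, D^i(θ_{n−1}), D^i(φ))_{i=0,…,n} expanded about its bottom-right entry D^n(φ). -/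
/-- Closed-form quasideterminant expression for the `n`-fold Darboux transform
built from a twisted derivation `D` with homomorphism `σ`. -/
theorem stmt_0 {R : Type*} [Ring R] (σ : R →+* R) (D : R → R)
    (hDadd : ∀ a b : R, D (a + b) = D a + D b)
    (hD : ∀ a b : R, D (a * b) = D a * b + σ a * D b)
    (n : ℕ) (θ : Fin n → R) (φ : R)
    (Θ : Fin n → R) (iter : ℕ → R → R)
    (hiter0 : ∀ ψ : R, iter 0 ψ = ψ)
    (hiterS : ∀ (k : ℕ) (hk : k < n) (ψ : R),
      iter (k + 1) ψ =
        D (iter k ψ) - D (Θ ⟨k, hk⟩) * Ring.inverse (Θ ⟨k, hk⟩) * iter k ψ)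
    (hΘ : ∀ k : Fin n, Θ k = iter (k : ℕ) (θ k))
    (hΘunit : ∀ k : Fin n, IsUnit (Θ k))
    (W : Matrix (Fin n) (Fin n) R)
    (hW : ∀ i j : Fin n, W i j = D^[(i : ℕ)] (θ j))
    (Winv : Matrix (Fin n) (Fin n) R)
    (hWl : W * Winv = 1) (hWr : Winv * W = 1) :
    iter n φ =
      D^[n] φ - ∑ j : Fin n, ∑ i : Fin n,
        D^[n] (θ j) * Winv j i * D^[(i : ℕ)] φ := by
  -- D as an additive monoid hom
  set Dh : R →+ R := AddMonoidHom.mk' D hDadd with hDh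
  have hDe : ∀ x, D x = Dh x := fun x => rfl
  have hD0 : D 0 = 0 := map_zero Dh
  -- Step 1: closed form with coefficients
  have key : ∀ k, k ≤ n → ∃ a : ℕ → R, a k = 1 ∧ (∀ i, k < i → a i = 0) ∧
      ∀ ψ, iter k ψ = ∑ i ∈ Finset.range (n+1), a i * D^[i] ψ := by
    intro k
    induction k with
    | zero =>
      intro _
      refine ⟨fun i => if i = 0 then 1 else 0, rfl, fun i hi => if_neg (by omega), fun ψ => ?_⟩
      rw [hiter0]
      simp [ite_mul]
    | succ k ih =>
      intro hk
      obtain ⟨a, hak, ha0, hsum⟩ := ih (le_of_lt hk)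
      set c : R := D (Θ ⟨k, hk⟩) * Ring.inverse (Θ ⟨k, hk⟩) with hc
      refine ⟨fun i => (D (a i) - c * a i) + (if i = 0 then 0 else σ (a (i-1))), ?_, ?_, ?_⟩
      · simp only [ha0 (k+1) (by omega), Nat.add_sub_cancel, hak, hD0, mul_zero, sub_zero,
          if_neg (Nat.succ_ne_zero k), map_one, zero_add]
      · intro i hi
        have h1 : a i = 0 := ha0 i (by omega)
        have h2 : a (i-1) = 0 := ha0 (i-1) (by omega)
        simp only [h1, h2, hD0, mul_zero, sub_zero, map_zero, ite_self, add_zero]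
      · intro ψ
        rw [hiterS k hk ψ, hsum ψ]
        have hDsum : D (∑ i ∈ Finset.range (n+1), a i * D^[i] ψ)
            = ∑ i ∈ Finset.range (n+1), (D (a i) * D^[i] ψ + σ (a i) * D^[i+1] ψ) := by
          rw [hDe, map_sum]
          refine Finset.sum_congr rfl fun i _ => ?_
          rw [← hDe, hD, Function.iterate_succ_apply']
        rw [hDsum, Finset.mul_sum]
        simp only [add_mul, sub_mul, Finset.sum_add_distrib, Finset.sum_sub_distrib]
        have h1 : ∑ i ∈ Finset.range (n+1), σ (a i) * D^[i+1] ψ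
            = ∑ i ∈ Finset.range (n+1), (if i = 0 then 0 else σ (a (i-1))) * D^[i] ψ := by
          rw [Finset.sum_range_succ' (fun i => (if i = 0 then 0 else σ (a (i-1))) * D^[i] ψ) n,
            Finset.sum_range_succ, ha0 n (by omega)]
          simp
        rw [h1]
        have h2 : ∑ i ∈ Finset.range (n+1), c * (a i * D^[i] ψ)
            = ∑ i ∈ Finset.range (n+1), (c * a i) * D^[i] ψ :=
          Finset.sum_congr rfl fun i _ => (mul_assoc c (a i) _).symm
        rw [h2]
        abel
  -- Step 2: iter m kills θ j once m > j
  have hvan : ∀ (j : Fin n) (m : ℕ), (j : ℕ) < m → m ≤ n → iter m (θ j) = 0 := by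
    intro j m
    induction m with
    | zero => omega
    | succ m ih =>
      intro h1 h2
      have hm : m < n := by omega
      rcases Nat.lt_or_ge (j : ℕ) m with hj | hj
      · rw [hiterS m hm, ih hj (by omega), hD0, mul_zero, sub_zero]
      · have hjm : j = (⟨m, hm⟩ : Fin n) := Fin.ext (show (j:ℕ) = m by omega)
        have hiΘ : iter m (θ j) = Θ j := by
          rw [hΘ j]; congr 1; omega
        rw [hiterS m hm, hiΘ, ← hjm, mul_assoc, Ring.inverse_mul_cancel _ (hΘunit j),
          mul_one, sub_self]
  obtain ⟨a, han, ha0, hsum⟩ := key n le_rfl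
  -- the linear relation: for each j, ∑_{i<n} a i * D^[i] θ j = - D^[n] θ j
  have hrel : ∀ j : Fin n, ∑ i : Fin n, a i * W i j = - D^[n] (θ j) := by
    intro j
    have h0 : iter n (θ j) = 0 := hvan j n j.isLt le_rfl
    rw [hsum (θ j), Finset.sum_range_succ, han, one_mul] at h0
    have heq : ∑ i ∈ Finset.range n, a i * D^[i] (θ j) = ∑ i : Fin n, a i * W i j := by
      rw [← Fin.sum_univ_eq_sum_range (fun i => a i * D^[i] (θ j)) n]
      exact Finset.sum_congr rfl fun i _ => by rw [hW]
    rw [heq] at h0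
    exact eq_neg_of_add_eq_zero_left h0
  -- solve for the coefficients
  have hai : ∀ i : Fin n, a (i : ℕ) = - ∑ j : Fin n, D^[n] (θ j) * Winv j i := by
    intro i0
    have h1 : a (i0 : ℕ) = ∑ k : Fin n, a (k : ℕ) * (W * Winv) k i0 := by
      rw [hWl]
      simp [Matrix.one_apply, mul_ite]
    rw [h1]
    calc ∑ k : Fin n, a (k : ℕ) * (W * Winv) k i0
        = ∑ k : Fin n, ∑ j : Fin n, (a (k : ℕ) * W k j) * Winv j i0 := by
          refine Finset.sum_congr rfl fun k _ => ?_
          rw [Matrix.mul_apply, Finset.mul_sum]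
          exact Finset.sum_congr rfl fun j _ => (mul_assoc _ _ _).symm
      _ = ∑ j : Fin n, (∑ k : Fin n, a (k : ℕ) * W k j) * Winv j i0 := by
          rw [Finset.sum_comm]
          exact Finset.sum_congr rfl fun j _ => (Finset.sum_mul _ _ _).symm
      _ = - ∑ j : Fin n, D^[n] (θ j) * Winv j i0 := by
          rw [← Finset.sum_neg_distrib]
          exact Finset.sum_congr rfl fun j _ => by rw [hrel j, neg_mul]
  -- final computation
  rw [hsum φ, Finset.sum_range_succ, han, one_mul,
    ← Fin.sum_univ_eq_sum_range (fun i => a i * D^[i] φ) n]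
  have hfin : ∑ i : Fin n, a (i : ℕ) * D^[(i : ℕ)] φ
      = - ∑ j : Fin n, ∑ i : Fin n, D^[n] (θ j) * Winv j i * D^[(i : ℕ)] φ := by
    calc ∑ i : Fin n, a (i : ℕ) * D^[(i : ℕ)] φ
        = ∑ i : Fin n, -(∑ j : Fin n, D^[n] (θ j) * Winv j i * D^[(i : ℕ)] φ) := by
          refine Finset.sum_congr rfl fun i _ => ?_
          rw [hai i, neg_mul, Finset.sum_mul]
      _ = - ∑ i : Fin n, ∑ j : Fin n, D^[n] (θ j) * Winv j i * D^[(i : ℕ)] φ :=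
          Finset.sum_neg_distrib _
      _ = _ := by rw [Finset.sum_comm]
  rw [hfin]
  abel
end

section
/- For all n ∈ ℤ and all x ≠ 0, y ≠ 0: (δ_{q^β,y}τ'_n)(x,y)·τ_n(x,y) − (δ_{q^β,y}τ_n)(x,y)·τ'_n(x,y) = τ'_{n−1}(x,y)·τ_{n+1}(x, q^β y). -/
open Matrix

section helpers

lemma of_snoc_eq_update {N : ℕ} (U : Fin N → Fin (N + 1) → ℂ) (x z : Fin (N + 1) → ℂ) :
    Matrix.of (Fin.snoc U z) = Matrix.updateRow (Matrix.of (Fin.snoc U x)) (Fin.last N) z := by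
  ext i j
  rcases eq_or_ne i (Fin.last N) with rfl | hi
  · simp
  · obtain ⟨i', rfl⟩ := Fin.exists_castSucc_eq.mpr hi
    simp [Matrix.updateRow_ne hi]

/-- det as a linear function of the last row. -/
noncomputable def lastRowDet {N : ℕ} (U : Fin N → Fin (N + 1) → ℂ) :
    (Fin (N + 1) → ℂ) →ₗ[ℂ] ℂ where
  toFun x := (Matrix.of (Fin.snoc U x)).det
  map_add' x y := by
    rw [of_snoc_eq_update U 0 (x + y), of_snoc_eq_update U 0 x, of_snoc_eq_update U 0 y,
      Matrix.det_updateRow_add]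
  map_smul' c x := by
    rw [of_snoc_eq_update U 0 (c • x), of_snoc_eq_update U 0 x,
      Matrix.det_updateRow_smul, smul_eq_mul, RingHom.id_apply]

/-- Grassmann–Plücker type relation. -/
theorem gp {d : ℕ} (φ : (Fin d → ℂ) →ₗ[ℂ] ℂ) (z : Fin (d + 1) → Fin d → ℂ) :
    ∑ k : Fin (d + 1), (-1 : ℂ) ^ (k : ℕ) * φ (z k) *
      (Matrix.of fun i j => z (k.succAbove i) j).det = 0 := by
  classical
  set M : Matrix (Fin (d + 1)) (Fin (d + 1)) ℂ :=
    Matrix.of (fun k => (Fin.snoc (z k) (φ (z k)) : Fin (d + 1) → ℂ)) with hM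
  have hdet : M.det = 0 := by
    by_contra h
    set v : Fin (d + 1) → ℂ :=
      Fin.snoc (fun i => φ (fun j => if i = j then 1 else 0)) (-1) with hv
    have hmv : M.mulVec v = 0 := by
      funext k
      have hφ := LinearMap.pi_apply_eq_sum_univ φ (z k)
      simp only [Matrix.mulVec, dotProduct, hM, Matrix.of_apply, Pi.zero_apply]
      rw [Fin.sum_univ_castSucc]
      simp only [hv, Fin.snoc_castSucc, Fin.snoc_last]
      rw [hφ]
      simp [mul_comm]
    have hv0 := Matrix.eq_zero_of_mulVec_eq_zero h hmv
    have : v (Fin.last d) = 0 := by rw [hv0]; rfl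
    simp [hv] at this
  have hexp := Matrix.det_succ_column M (Fin.last d)
  rw [hdet] at hexp
  have : ∀ k : Fin (d + 1),
      (-1 : ℂ) ^ ((k : ℕ) + (Fin.last d : ℕ)) * M k (Fin.last d) *
        (M.submatrix k.succAbove (Fin.last d).succAbove).det
      = (-1 : ℂ) ^ (d : ℕ) * ((-1 : ℂ) ^ (k : ℕ) * φ (z k) *
          (Matrix.of fun i j => z (k.succAbove i) j).det) := by
    intro k
    have h1 : M k (Fin.last d) = φ (z k) := by simp [hM]
    have h2 : M.submatrix k.succAbove (Fin.last d).succAbove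
        = Matrix.of fun i j => z (k.succAbove i) j := by
      ext i j
      simp [hM, Fin.succAbove_last]
    rw [h1, h2, pow_add, Fin.val_last]
    ring
  rw [Finset.sum_congr rfl (fun k _ => this k), ← Finset.mul_sum] at hexp
  have hne : (-1 : ℂ) ^ (d : ℕ) ≠ 0 := by
    simp [pow_ne_zero]
  exact (mul_eq_zero.mp hexp.symm).resolve_left hne

lemma det_cons_eq {N : ℕ} (a : Fin (N + 1) → ℂ) (u : Fin N → Fin (N + 1) → ℂ) :
    (Matrix.of (Fin.cons a u : Fin (N + 1) → Fin (N + 1) → ℂ)).det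
      = (-1 : ℂ) ^ N * (Matrix.of (Fin.snoc u a : Fin (N + 1) → Fin (N + 1) → ℂ)).det := by
  have hsub : (Matrix.of (Fin.cons a u : Fin (N + 1) → Fin (N + 1) → ℂ)).submatrix
      (finRotate (N + 1)) id = Matrix.of (Fin.snoc u a) := by
    ext j k
    refine Fin.lastCases ?_ (fun m => ?_) j
    · simp [finRotate_last]
    · simp [finRotate_succ_apply, Fin.coeSucc_eq_succ]
  calc (Matrix.of (Fin.cons a u : Fin (N + 1) → Fin (N + 1) → ℂ)).det
      = (-1:ℂ)^N * ((-1:ℂ)^N *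
        (Matrix.of (Fin.cons a u : Fin (N + 1) → Fin (N + 1) → ℂ)).det) := by
        rw [← mul_assoc, ← pow_add]
        rw [Even.neg_one_pow ⟨N, rfl⟩, one_mul]
    _ = (-1:ℂ)^N * (Matrix.of (Fin.snoc u a : Fin (N + 1) → Fin (N + 1) → ℂ)).det := by
        rw [← hsub, Matrix.det_permute, sign_finRotate]
        push_cast
        ring

lemma det_snoc_single {N : ℕ} (u : Fin N → Fin (N + 1) → ℂ) :
    (Matrix.of (Fin.snoc u (Pi.single (Fin.last N) 1) : Fin (N + 1) → Fin (N + 1) → ℂ)).det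
      = (Matrix.of fun j k : Fin N => u j k.castSucc).det := by
  rw [Matrix.det_succ_row _ (Fin.last N)]
  rw [Finset.sum_eq_single (Fin.last N)]
  · simp only [Matrix.of_apply, Fin.snoc_last, Fin.succAbove_last, Pi.single_eq_same, Fin.val_last]
    rw [Even.neg_one_pow ⟨N, rfl⟩, one_mul, one_mul]
    congr 1
    ext j k
    simp [Fin.snoc_castSucc]
  · intro b _ hb
    have : (Matrix.of (Fin.snoc u (Pi.single (Fin.last N) 1) :
        Fin (N + 1) → Fin (N + 1) → ℂ)) (Fin.last N) b = 0 := by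
      simp [Fin.snoc_last, Pi.single_apply, (Ne.symm hb)]
    rw [this]; ring
  · simp

lemma det_flip {m : ℕ} (g : Fin m → Fin m → ℂ) :
    (Matrix.of g).det = (Matrix.of fun a b => g b a).det := by
  rw [← Matrix.det_transpose]
  rfl

end helpers

lemma key (N : ℕ) (c : ℂ) (v w : ℤ → Fin (N + 1) → ℂ)
    (hw : ∀ m : ℤ, w m = v m - c • v (m - 1)) (n : ℤ) :
    (Matrix.of fun j : Fin (N + 1) => v (n + (j : ℕ))).det *
        (Matrix.of (Fin.snoc (fun j : Fin N => w (n + (j : ℕ)))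
          (Pi.single (Fin.last N) 1) : Fin (N + 1) → Fin (N + 1) → ℂ)).det
      - (Matrix.of fun j : Fin (N + 1) => w (n + (j : ℕ))).det *
        (Matrix.of (Fin.snoc (fun j : Fin N => v (n + (j : ℕ)))
          (Pi.single (Fin.last N) 1) : Fin (N + 1) → Fin (N + 1) → ℂ)).det
      = c * (Matrix.of fun j : Fin (N + 1) => v (n - 1 + (j : ℕ))).det *
        (Matrix.of (Fin.snoc (fun j : Fin N => w (n + 1 + (j : ℕ)))
          (Pi.single (Fin.last N) 1) : Fin (N + 1) → Fin (N + 1) → ℂ)).det := by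
  classical
  set e : Fin (N + 1) → ℂ := Pi.single (Fin.last N) 1 with he
  set U : Fin N → Fin (N + 1) → ℂ := fun j => v (n + (j : ℕ)) with hU
  set φ := lastRowDet U with hφdef
  set A := (Matrix.of fun j : Fin (N + 1) => v (n + (j : ℕ))).det with hA
  set B := (Matrix.of fun j : Fin (N + 1) => w (n + (j : ℕ))).det with hB
  set P := (Matrix.of fun j : Fin (N + 1) => v (n - 1 + (j : ℕ))).det with hP
  set T := (Matrix.of (Fin.snoc (fun j : Fin N => v (n + (j : ℕ))) e :
    Fin (N + 1) → Fin (N + 1) → ℂ)).det with hT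
  set Tt := (Matrix.of (Fin.snoc (fun j : Fin N => w (n + (j : ℕ))) e :
    Fin (N + 1) → Fin (N + 1) → ℂ)).det with hTt
  set S := (Matrix.of (Fin.snoc (fun j : Fin N => w (n + 1 + (j : ℕ))) e :
    Fin (N + 1) → Fin (N + 1) → ℂ)).det with hS
  set z : Fin (N + 2) → Fin (N + 1) → ℂ :=
    Fin.cons e (fun j : Fin (N + 1) => w (n + (j : ℕ))) with hz
  have h11 : (-1 : ℂ) ^ N * (-1 : ℂ) ^ N = 1 := by
    rw [← pow_add]; exact Even.neg_one_pow ⟨N, rfl⟩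
  have hφ_apply : ∀ x, φ x =
      (Matrix.of (Fin.snoc U x : Fin (N + 1) → Fin (N + 1) → ℂ)).det := fun _ => rfl
  have hφi : ∀ i : Fin N, φ (v (n + (i : ℕ))) = 0 := by
    intro i
    rw [hφ_apply]
    refine Matrix.det_zero_of_row_eq (i := i.castSucc) (j := Fin.last N)
      (Fin.castSucc_lt_last i).ne ?_
    show (Fin.snoc U _ : Fin (N + 1) → Fin (N + 1) → ℂ) i.castSucc
      = (Fin.snoc U _ : Fin (N + 1) → Fin (N + 1) → ℂ) (Fin.last N)
    rw [Fin.snoc_castSucc, Fin.snoc_last]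
  have hφlast : φ (v (n + (N : ℕ))) = A := by
    rw [hφ_apply, hA]
    congr 1
    ext j k
    refine Fin.lastCases ?_ (fun m => ?_) j
    · simp [Fin.snoc_last]
    · simp [Fin.snoc_castSucc, hU]
  have hφP : φ (v (n - 1)) = (-1 : ℂ) ^ N * P := by
    have hmat : (Matrix.of (Fin.cons (v (n - 1)) U : Fin (N + 1) → Fin (N + 1) → ℂ))
        = Matrix.of fun j : Fin (N + 1) => v (n - 1 + (j : ℕ)) := by
      ext j k
      refine Fin.cases ?_ (fun m => ?_) j
      · simp only [Fin.cons_zero, Matrix.of_apply, Fin.val_zero]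
        norm_num
      · simp only [Fin.cons_succ, Matrix.of_apply]
        have harg : n + ((m : ℕ) : ℤ) = n - 1 + ((m.succ : ℕ) : ℤ) := by
          rw [Fin.val_succ]; push_cast; ring
        rw [show U m = v (n + ((m : ℕ) : ℤ)) from rfl, harg]
    have h2 : P = (-1 : ℂ) ^ N * φ (v (n - 1)) := by
      rw [hP, ← hmat, det_cons_eq, hφ_apply]
    rw [h2, ← mul_assoc, h11, one_mul]
  -- determinants of the reduced matrices
  have hD : ∀ j : Fin (N + 1),
      (Matrix.of fun i k => z ((Fin.succ j).succAbove i) k).det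
        = (-1 : ℂ) ^ N * (Matrix.of (Fin.snoc
            (fun m : Fin N => w (n + ((j.succAbove m : ℕ) : ℤ))) e :
            Fin (N + 1) → Fin (N + 1) → ℂ)).det := by
    intro j
    rw [← det_cons_eq]
    congr 1
    ext i k
    refine Fin.cases ?_ (fun m => ?_) i
    · rw [Matrix.of_apply, Matrix.of_apply, Fin.succ_succAbove_zero, Fin.cons_zero, hz,
        Fin.cons_zero]
    · rw [Matrix.of_apply, Matrix.of_apply, Fin.succ_succAbove_succ, hz, Fin.cons_succ,
        Fin.cons_succ]
  have hD0 : (Matrix.of fun i k => z ((Fin.succ (0 : Fin (N + 1))).succAbove i) k).det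
      = (-1 : ℂ) ^ N * S := by
    rw [hD 0, hS]
    congr 2
    ext i k
    refine Fin.lastCases ?_ (fun m => ?_) i
    · simp only [Matrix.of_apply, Fin.snoc_last]
    · simp only [Matrix.of_apply, Fin.snoc_castSucc]
      have : n + (((0 : Fin (N + 1)).succAbove m : ℕ) : ℤ) = n + 1 + (m : ℕ) := by
        rw [Fin.zero_succAbove, Fin.val_succ]; push_cast; ring
      rw [this]
  have hDlast : (Matrix.of fun i k => z ((Fin.succ (Fin.last N)).succAbove i) k).det
      = (-1 : ℂ) ^ N * Tt := by
    rw [hD (Fin.last N), hTt]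
    congr 2
    ext i k
    refine Fin.lastCases ?_ (fun m => ?_) i
    · simp only [Matrix.of_apply, Fin.snoc_last]
    · simp only [Matrix.of_apply, Fin.snoc_castSucc]
      have : n + (((Fin.last N).succAbove m : ℕ) : ℤ) = n + (m : ℕ) := by
        rw [Fin.succAbove_last, Fin.coe_castSucc]
      rw [this]
  have hφw : ∀ j : Fin (N + 1), φ (w (n + (j : ℕ)))
      = (if j = Fin.last N then A else 0)
        - c * (if j = 0 then (-1 : ℂ) ^ N * P else 0) := by
    intro j
    rw [hw, map_sub, LinearMap.map_smul, smul_eq_mul]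
    congr 1
    · by_cases hj : j = Fin.last N
      · subst hj
        rw [if_pos rfl, Fin.val_last]
        exact hφlast
      · rw [if_neg hj]
        have hlt : (j : ℕ) < N := Fin.val_lt_last hj
        exact hφi ⟨(j : ℕ), hlt⟩
    · by_cases hj : j = 0
      · subst hj
        rw [if_pos rfl]
        have : n + ((0 : Fin (N + 1)) : ℕ) - 1 = n - 1 := by norm_num
        rw [this, hφP]
      · rw [if_neg hj, mul_zero, mul_eq_zero]
        right
        have hpos : 0 < (j : ℕ) := Fin.pos_iff_ne_zero.mpr hj
        have hlt : (j : ℕ) - 1 < N := by omega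
        have harg : n + ((j : ℕ) : ℤ) - 1 = n + (((j : ℕ) - 1 : ℕ) : ℤ) := by omega
        rw [harg]
        exact hφi ⟨(j : ℕ) - 1, hlt⟩
  -- assemble via Grassmann–Plücker
  have h0 := gp φ z
  rw [Fin.sum_univ_succ] at h0
  have hterm0 : (-1 : ℂ) ^ (((0 : Fin (N + 2))) : ℕ) * φ (z 0) *
      (Matrix.of fun i k => z ((0 : Fin (N + 2)).succAbove i) k).det = T * B := by
    have hz0 : z 0 = e := Fin.cons_zero _ _
    have hmat : (Matrix.of fun i k => z ((0 : Fin (N + 2)).succAbove i) k)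
        = Matrix.of fun i : Fin (N + 1) => w (n + (i : ℕ)) := by
      ext i k
      rw [Matrix.of_apply, Matrix.of_apply, Fin.zero_succAbove, hz, Fin.cons_succ]
    rw [hz0, hmat, hφ_apply, ← hB]
    simp only [Fin.val_zero, pow_zero, one_mul]
    try rw [← hT]
    try rfl
  have hterm : ∀ j : Fin (N + 1),
      (-1 : ℂ) ^ ((j.succ : Fin (N + 2)) : ℕ) * φ (z j.succ) *
        (Matrix.of fun i k => z ((j.succ).succAbove i) k).det
      = (if j = Fin.last N then -(A * Tt) else 0) + (if j = 0 then c * (P * S) else 0) := by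
    intro j
    have hzj : z j.succ = w (n + (j : ℕ)) := Fin.cons_succ _ _ _
    rw [hzj, hφw j, Fin.val_succ]
    by_cases hj0 : j = 0 <;> by_cases hjl : j = Fin.last N
    · -- N = 0 case
      subst hj0
      have hN : N = 0 := by
        have := congrArg Fin.val hjl
        simpa using this.symm
      subst hN
      have hTS : Tt = S := by
        have hfun : (fun m : Fin 0 => w (n + (m : ℕ))) = (fun m : Fin 0 => w (n + 1 + (m : ℕ))) := by
          funext m; exact absurd m.2 (by omega)
        rw [hTt, hS, hfun]
      rw [← hjl, if_pos rfl, if_pos rfl, hD0, hTS]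
      norm_num
      try ring
    · -- j = 0, j ≠ last
      subst hj0
      rw [if_neg hjl, if_pos rfl, if_neg hjl, if_pos rfl, hD0]
      simp only [Fin.val_zero, pow_one, zero_add, pow_zero]
      linear_combination c * P * S * h11
    · -- j = last, j ≠ 0
      subst hjl
      rw [if_pos rfl, if_neg hj0, if_pos rfl, if_neg hj0, hDlast, Fin.val_last]
      rw [pow_succ]
      linear_combination (-(A * Tt)) * h11
    · rw [if_neg hjl, if_neg hj0, if_neg hjl, if_neg hj0]
      ring
  rw [hterm0, Finset.sum_congr rfl (fun j _ => hterm j), Finset.sum_add_distrib,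
    Finset.sum_ite_eq' Finset.univ (Fin.last N), Finset.sum_ite_eq' Finset.univ (0 : Fin (N + 1)),
    if_pos (Finset.mem_univ _), if_pos (Finset.mem_univ _)] at h0
  linear_combination -h0

/-- The q-difference operator in `x`. -/
noncomputable def qdiffX (q α : ℝ) (f : ℝ → ℝ → ℂ) (x y : ℝ) : ℂ :=
  (f x y - f (q ^ α * x) y) / (((1 - q) * x : ℝ) : ℂ)

/-- The q-difference operator in `y`. -/
noncomputable def qdiffY (q β : ℝ) (f : ℝ → ℝ → ℂ) (x y : ℝ) : ℂ :=
  (f x y - f x (q ^ β * y)) / (((1 - q) * y : ℝ) : ℂ)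

/-- First equation of the bilinear Bäcklund transformation for the bilinear
q-2DTL equation, verified on Casoratian solutions. -/
theorem stmt_1 (q α β : ℝ) (hq : 0 < q) (hq1 : q ≠ 1) (N : ℕ)
    (f : Fin (N + 1) → ℤ → ℝ → ℝ → ℂ)
    (hdx : ∀ (k : Fin (N + 1)) (n : ℤ) (x y : ℝ), x ≠ 0 → y ≠ 0 →
      qdiffX q α (f k n) x y = -f k (n + 1) x y)
    (hdy : ∀ (k : Fin (N + 1)) (n : ℤ) (x y : ℝ), x ≠ 0 → y ≠ 0 →
      qdiffY q β (f k n) x y = f k (n - 1) x y)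
    (τ τ' : ℤ → ℝ → ℝ → ℂ)
    (hτ : ∀ (n : ℤ) (x y : ℝ),
      τ n x y = Matrix.det (Matrix.of fun k j : Fin N => f k.castSucc (n + (j : ℕ)) x y))
    (hτ' : ∀ (n : ℤ) (x y : ℝ),
      τ' n x y = Matrix.det (Matrix.of fun k j : Fin (N + 1) => f k (n + (j : ℕ)) x y)) :
    ∀ (n : ℤ) (x y : ℝ), x ≠ 0 → y ≠ 0 →
      qdiffY q β (τ' n) x y * τ n x y - qdiffY q β (τ n) x y * τ' n x y
        = τ' (n - 1) x y * τ (n + 1) x (q ^ β * y) := by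
  intro n x y hx hy
  have hcR : ((1 - q) * y : ℝ) ≠ 0 :=
    mul_ne_zero (sub_ne_zero.mpr fun h => hq1 h.symm) hy
  set c : ℂ := (((1 - q) * y : ℝ) : ℂ) with hc
  have hcC : c ≠ 0 := by
    rw [hc]
    exact_mod_cast Complex.ofReal_ne_zero.mpr hcR
  set v : ℤ → Fin (N + 1) → ℂ := fun m i => f i m x y with hv
  set w : ℤ → Fin (N + 1) → ℂ := fun m i => f i m x (q ^ β * y) with hwdef
  have hw : ∀ m : ℤ, w m = v m - c • v (m - 1) := by
    intro m
    funext i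
    have h := hdy i m x y hx hy
    rw [qdiffY, ← hc, div_eq_iff hcC] at h
    simp only [hwdef, hv, Pi.sub_apply, Pi.smul_apply, smul_eq_mul]
    linear_combination -h
  have hA : τ' n x y = (Matrix.of fun j : Fin (N + 1) => v (n + (j : ℕ))).det := by
    rw [hτ']; exact det_flip _
  have hB : τ' n x (q ^ β * y) = (Matrix.of fun j : Fin (N + 1) => w (n + (j : ℕ))).det := by
    rw [hτ']; exact det_flip _
  have hP : τ' (n - 1) x y = (Matrix.of fun j : Fin (N + 1) => v (n - 1 + (j : ℕ))).det := by
    rw [hτ']; exact det_flip _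
  have hT : τ n x y = (Matrix.of (Fin.snoc (fun j : Fin N => v (n + (j : ℕ)))
      (Pi.single (Fin.last N) 1) : Fin (N + 1) → Fin (N + 1) → ℂ)).det := by
    rw [hτ, det_flip]; exact (det_snoc_single (fun j => v (n + (j : ℕ)))).symm
  have hTt : τ n x (q ^ β * y) = (Matrix.of (Fin.snoc (fun j : Fin N => w (n + (j : ℕ)))
      (Pi.single (Fin.last N) 1) : Fin (N + 1) → Fin (N + 1) → ℂ)).det := by
    rw [hτ, det_flip]; exact (det_snoc_single (fun j => w (n + (j : ℕ)))).symm
  have hS : τ (n + 1) x (q ^ β * y) = (Matrix.of (Fin.snoc (fun j : Fin N => w (n + 1 + (j : ℕ)))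
      (Pi.single (Fin.last N) 1) : Fin (N + 1) → Fin (N + 1) → ℂ)).det := by
    rw [hτ, det_flip]; exact (det_snoc_single (fun j => w (n + 1 + (j : ℕ)))).symm
  have hkey := key N c v w hw n
  simp only [qdiffY, ← hc]
  rw [hA, hB, hT, hTt, hP, hS]
  field_simp
  linear_combination hkey
end

section
/- For all n ∈ ℤ and all x ≠ 0, y ≠ 0: (δ_{q^α,x}τ_n)(x,y)·τ'_{n−1}(x,y) − (δ_{q^α,x}τ'_{n−1})(x,y)·τ_n(x,y) = τ_{n−1}(q^α x, y)·τ'_n(x,y). -/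
open Matrix

theorem my_uc_comm {m : ℕ} {R : Type*} [CommRing R] (A : Matrix (Fin m) (Fin m) R)
    {c1 c2 : Fin m} (hc : c1 ≠ c2) (v w : Fin m → R) :
    (A.updateCol c1 v).updateCol c2 w = (A.updateCol c2 w).updateCol c1 v := by
  ext i j
  simp only [Matrix.updateCol_apply]
  by_cases h1 : j = c1 <;> by_cases h2 : j = c2
  · exact (hc (h1.symm.trans h2)).elim
  all_goals simp [h1, h2, hc, hc.symm]

theorem jacobi_aux {m : ℕ} {R : Type*} [CommRing R] (A : Matrix (Fin m) (Fin m) R)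
    (r1 r2 c1 c2 : Fin m) (hc : c1 ≠ c2) :
    A.det * (adjugate A c1 r1 * adjugate A c2 r2 - adjugate A c2 r1 * adjugate A c1 r2)
      = A.det * (A.det *
        ((A.updateCol c1 (Pi.single r1 1)).updateCol c2 (Pi.single r2 1)).det) := by
  classical
  set B : Matrix (Fin m) (Fin m) R := Matrix.of fun i j =>
    if j = c1 then adjugate A i r1 else if j = c2 then adjugate A i r2
      else (1 : Matrix (Fin m) (Fin m) R) i j with hB
  have hAB : A * B = (A.updateCol c1 (A.det • (Pi.single r1 1 : Fin m → R))).updateCol c2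
      (A.det • (Pi.single r2 1 : Fin m → R)) := by
    ext i j
    by_cases h1 : j = c1
    · subst h1
      have : (A * B) i j = (A * adjugate A) i r1 := by
        rw [mul_apply, mul_apply]
        exact Finset.sum_congr rfl fun k _ => by simp [hB]
      rw [this, mul_adjugate]
      simp [Matrix.updateCol_apply, hc, Pi.single_apply, Matrix.one_apply, eq_comm]
    · by_cases h2 : j = c2
      · subst h2
        have : (A * B) i j = (A * adjugate A) i r2 := by
          rw [mul_apply, mul_apply]
          refine Finset.sum_congr rfl fun k _ => by simp [hB, h1, hc.symm]
        rw [this, mul_adjugate]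
        simp [Matrix.updateCol_apply, Pi.single_apply, Matrix.one_apply, eq_comm]
      · have : (A * B) i j = (A * (1 : Matrix (Fin m) (Fin m) R)) i j := by
          rw [mul_apply, mul_apply]
          exact Finset.sum_congr rfl fun k _ => by simp [hB, h1, h2]
        rw [this, mul_one]
        simp [Matrix.updateCol_apply, h1, h2]
  have hdetB : B.det = adjugate A c1 r1 * adjugate A c2 r2
      - adjugate A c2 r1 * adjugate A c1 r2 := by
    set U : Matrix (Fin m) (Fin 2) R := Matrix.of fun i =>
      ![adjugate A i r1 - (1 : Matrix (Fin m) (Fin m) R) i c1,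
        adjugate A i r2 - (1 : Matrix (Fin m) (Fin m) R) i c2] with hU
    set V : Matrix (Fin 2) (Fin m) R := Matrix.of
      ![fun j => (1 : Matrix (Fin m) (Fin m) R) c1 j,
        fun j => (1 : Matrix (Fin m) (Fin m) R) c2 j] with hV
    have collapse : ∀ (g : Fin m → R) (c : Fin m),
        (∑ j, (1 : Matrix (Fin m) (Fin m) R) c j * g j) = g c := by
      intro g c
      simp [Matrix.one_apply, ite_mul, Finset.sum_ite_eq]
    have hBUV : B = 1 + U * V := by
      ext i j
      rw [Matrix.add_apply, mul_apply, Fin.sum_univ_two]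
      simp only [hU, hV, Matrix.of_apply, Matrix.cons_val_zero, Matrix.cons_val_one,
        Matrix.head_cons]
      by_cases h1 : j = c1
      · subst h1
        simp [hB, Matrix.one_apply, hc, hc.symm]
        try ring
      · by_cases h2 : j = c2
        · subst h2
          simp [hB, Matrix.one_apply, hc, hc.symm, h1]
          try ring
        · simp [hB, Matrix.one_apply, h1, h2, Ne.symm h1, Ne.symm h2]
    rw [hBUV, Matrix.det_one_add_mul_comm]
    have hVU : ∀ t s, (V * U) t s = U (![c1, c2] t) s := by
      intro t s
      fin_cases t <;>
        simp only [mul_apply, hV, Matrix.of_apply, Matrix.cons_val_zero, Matrix.cons_val_one,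
          Matrix.head_cons, Matrix.cons_val', Matrix.empty_val'] <;> exact collapse _ _
    rw [Matrix.det_fin_two]
    simp only [Matrix.add_apply, hVU]
    simp [hU, Matrix.one_apply, hc, hc.symm]
    ring
  have hdetAB : (A * B).det
      = A.det * (A.det *
        ((A.updateCol c1 (Pi.single r1 1)).updateCol c2 (Pi.single r2 1)).det) := by
    rw [hAB, Matrix.det_updateCol_smul, my_uc_comm _ hc, Matrix.det_updateCol_smul,
      my_uc_comm _ hc.symm]
  rw [← hdetB, ← Matrix.det_mul, hdetAB]

theorem my_map_updateCol {R S : Type*} [CommRing R] [CommRing S] (φ : R →+* S) {m : ℕ}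
    (A : Matrix (Fin m) (Fin m) R) (c : Fin m) (v : Fin m → R) :
    φ.mapMatrix (A.updateCol c v) = (φ.mapMatrix A).updateCol c (φ ∘ v) := by
  ext i j
  by_cases h : j = c <;>
    simp [Matrix.updateCol_apply, h, RingHom.mapMatrix_apply, Matrix.map_apply]

theorem my_map_single {R S : Type*} [CommRing R] [CommRing S] (φ : R →+* S) {m : ℕ} (r : Fin m) :
    φ ∘ (Pi.single r 1 : Fin m → R) = (Pi.single r 1 : Fin m → S) := by
  funext j
  by_cases h : j = r <;> simp [Pi.single_apply, h]

theorem jacobi {m : ℕ} {R : Type*} [CommRing R] (A : Matrix (Fin m) (Fin m) R)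
    (r1 r2 c1 c2 : Fin m) (hc : c1 ≠ c2) :
    adjugate A c1 r1 * adjugate A c2 r2 - adjugate A c2 r1 * adjugate A c1 r2
      = A.det *
        ((A.updateCol c1 (Pi.single r1 1)).updateCol c2 (Pi.single r2 1)).det := by
  classical
  set R₀ := MvPolynomial (Fin m × Fin m) ℤ with hR₀
  set A₀ : Matrix (Fin m) (Fin m) R₀ := Matrix.of fun i j => MvPolynomial.X (i, j) with hA₀
  have hd : A₀.det ≠ 0 := by
    intro h
    have h2 := congrArg (MvPolynomial.eval
      (fun p : Fin m × Fin m => if p.1 = p.2 then (1 : ℤ) else 0)) h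
    rw [map_zero] at h2
    rw [RingHom.map_det] at h2
    have : (MvPolynomial.eval
        (fun p : Fin m × Fin m => if p.1 = p.2 then (1 : ℤ) else 0)).mapMatrix A₀
        = (1 : Matrix (Fin m) (Fin m) ℤ) := by
      ext i j
      simp [hA₀, RingHom.mapMatrix_apply, Matrix.map_apply, Matrix.one_apply]
    rw [this, Matrix.det_one] at h2
    exact one_ne_zero h2
  have hgen : adjugate A₀ c1 r1 * adjugate A₀ c2 r2 - adjugate A₀ c2 r1 * adjugate A₀ c1 r2
      = A₀.det *
        ((A₀.updateCol c1 (Pi.single r1 1)).updateCol c2 (Pi.single r2 1)).det :=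
    mul_left_cancel₀ hd (jacobi_aux A₀ r1 r2 c1 c2 hc)
  set φ : R₀ →+* R := MvPolynomial.eval₂Hom (Int.castRingHom R) (fun p => A p.1 p.2) with hφ
  have hmap : φ.mapMatrix A₀ = A := by
    ext i j
    simp only [hA₀, hφ, RingHom.mapMatrix_apply, Matrix.map_apply, Matrix.of_apply]
    exact MvPolynomial.eval₂Hom_X' _ _ _
  have hfin := congrArg φ hgen
  rw [map_sub, _root_.map_mul, _root_.map_mul, _root_.map_mul, RingHom.map_det] at hfin
  have hadj : ∀ c r : Fin m, φ (adjugate A₀ c r) = adjugate A c r := by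
    intro c r
    calc φ (adjugate A₀ c r) = (φ.mapMatrix (adjugate A₀)) c r := rfl
      _ = adjugate (φ.mapMatrix A₀) c r := by rw [RingHom.map_adjugate]
      _ = adjugate A c r := by rw [hmap]
  rw [hadj, hadj, hadj, hadj, hmap, RingHom.map_det, my_map_updateCol, my_map_updateCol,
    my_map_single, my_map_single, hmap] at hfin
  exact hfin

theorem bordered_det {m : ℕ} (a : ℂ) (u : Fin (m+1) → Fin m → ℂ) :
    (Matrix.of fun (i j : Fin (m+1)) =>
        Fin.lastCases ((-a) ^ (m - (j:ℕ))) (fun i' => u j i') i).det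
    = (Matrix.of fun (i p : Fin m) => u p.castSucc i + a * u p.succ i).det := by
  set C : Fin (m+1) → Fin (m+1) → ℂ := fun j i =>
    Fin.lastCases ((-a) ^ (m - (j:ℕ))) (fun i' => u j i') i with hC
  have hsucc : ∀ (j : Fin (m+1)), (j:ℕ) < m → ((j+1 : Fin (m+1)) : ℕ) = (j:ℕ)+1 := by
    intro j hj
    rw [Fin.val_add_one, if_neg]
    intro h
    rw [h, Fin.val_last] at hj
    omega
  set M : ℕ → Matrix (Fin (m+1)) (Fin (m+1)) ℂ := fun t =>
    Matrix.of fun i j => if (j:ℕ) < t then C j i + a * C (j+1) i else C j i with hM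
  have hstep : ∀ t : ℕ, t < m → (M (t+1)).det = (M t).det := by
    intro t ht
    have h1 : (⟨t, by omega⟩ : Fin (m+1)) ≠ ⟨t+1, by omega⟩ := by
      simp [Fin.ext_iff]
    have hup : M (t+1) = (M t).updateCol ⟨t, by omega⟩
        (fun k => (M t) k ⟨t, by omega⟩ + a • (M t) k ⟨t+1, by omega⟩) := by
      ext i j
      rw [Matrix.updateCol_apply]
      by_cases hj : j = ⟨t, by omega⟩
      · subst hj
        rw [if_pos rfl]
        simp only [hM, Matrix.of_apply, smul_eq_mul]
        rw [if_pos (by simp), if_neg (by simp), if_neg (by simp)]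
        have : ((⟨t, by omega⟩ : Fin (m+1)) + 1) = (⟨t+1, by omega⟩ : Fin (m+1)) := by
          apply Fin.ext
          rw [hsucc ⟨t, by omega⟩ (by simpa using ht)]
        rw [this]
      · rw [if_neg hj]
        simp only [hM, Matrix.of_apply]
        have hjv : (j:ℕ) ≠ t := fun h => hj (Fin.ext h)
        by_cases h2 : (j:ℕ) < t
        · rw [if_pos (by omega), if_pos h2]
        · rw [if_neg (by omega), if_neg h2]
    rw [hup, Matrix.det_updateCol_add_smul_self _ h1 a]
  have hall : ∀ t, t ≤ m → (M t).det = (M 0).det := by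
    intro t
    induction t with
    | zero => intro _; rfl
    | succ t ih => intro ht; rw [hstep t (by omega), ih (by omega)]
  have hM0 : (Matrix.of fun (i j : Fin (m+1)) =>
      Fin.lastCases ((-a) ^ (m - (j:ℕ))) (fun i' => u j i') i) = M 0 := by
    ext i j
    simp [hM, hC]
  rw [hM0, ← hall m le_rfl]
  rw [Matrix.det_succ_row (M m) (Fin.last m)]
  rw [Finset.sum_eq_single (Fin.last m)]
  · have hentry : (M m) (Fin.last m) (Fin.last m) = 1 := by
      simp only [hM, Matrix.of_apply, Fin.val_last, lt_irrefl, if_neg (lt_irrefl m), hC]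
      rw [Fin.lastCases_last]
      simp
    have hsign : ((-1 : ℂ)) ^ ((Fin.last m : ℕ) + (Fin.last m : ℕ)) = 1 := by
      rw [Fin.val_last, ← two_mul, pow_mul]
      norm_num
    rw [hentry, hsign, mul_one, one_mul]
    congr 1
    ext i p
    simp only [Matrix.submatrix_apply, Fin.succAbove_last, hM, Matrix.of_apply]
    rw [if_pos (by simpa using p.isLt)]
    have hps : (p.castSucc + 1 : Fin (m+1)) = p.succ := by
      apply Fin.ext
      rw [hsucc p.castSucc (by simpa using p.isLt)]
      simp
    rw [hps]
    simp only [hC, Fin.lastCases_castSucc]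
  · intro j _ hj
    have hjlt : (j:ℕ) < m := by
      have := j.isLt
      have : (j:ℕ) ≠ m := fun h => hj (Fin.ext (by simpa using h))
      omega
    have hz : (M m) (Fin.last m) j = 0 := by
      simp only [hM, Matrix.of_apply, if_pos hjlt, hC]
      rw [Fin.lastCases_last, Fin.lastCases_last, hsucc j hjlt]
      have he : m - (j:ℕ) = (m - ((j:ℕ)+1)) + 1 := by omega
      rw [he, pow_succ]
      ring
    rw [hz]
    ring
  · intro h
    exact (h (Finset.mem_univ _)).elim

theorem bordered_det' {m : ℕ} (a : ℂ) (u : Fin (m+1) → Fin m → ℂ) :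
    (Matrix.of fun (i j : Fin (m+1)) =>
        Fin.lastCases ((-a) ^ (m + 1 - (j:ℕ))) (fun i' => u j i') i).det
    = (-a) * (Matrix.of fun (i p : Fin m) => u p.castSucc i + a * u p.succ i).det := by
  rw [← bordered_det a u]
  set A : Matrix (Fin (m+1)) (Fin (m+1)) ℂ := Matrix.of fun (i j : Fin (m+1)) =>
    Fin.lastCases ((-a) ^ (m - (j:ℕ))) (fun i' => u j i') i with hA
  have key : (Matrix.of fun (i j : Fin (m+1)) =>
      Fin.lastCases ((-a) ^ (m + 1 - (j:ℕ))) (fun i' => u j i') i)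
      = A.updateRow (Fin.last m) ((-a) • fun j : Fin (m+1) => (-a) ^ (m - (j:ℕ))) := by
    ext i j
    induction i using Fin.lastCases with
    | last =>
      rw [Matrix.updateRow_self]
      simp only [Matrix.of_apply, Fin.lastCases_last, Pi.smul_apply, smul_eq_mul]
      have : m + 1 - (j:ℕ) = (m - (j:ℕ)) + 1 := by omega
      rw [this, pow_succ]
      ring
    | cast i' =>
      rw [Matrix.updateRow_ne (Fin.castSucc_lt_last i').ne]
      simp only [Matrix.of_apply, Fin.lastCases_castSucc, hA]
  rw [key, Matrix.det_updateRow_smul]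
  congr 1
  · have : (fun j : Fin (m+1) => (-a) ^ (m - (j:ℕ))) = A (Fin.last m) := by
      funext j
      simp [hA]
    rw [this, Matrix.updateRow_eq_self]

theorem adjcol {m : ℕ} (A : Matrix (Fin (m+1)) (Fin (m+1)) ℂ) (r c : Fin (m+1)) :
    (A.updateCol c (Pi.single r 1)).det
      = (-1 : ℂ) ^ ((r:ℕ) + (c:ℕ)) * (A.submatrix r.succAbove c.succAbove).det := by
  have h1 : (A.updateCol c (Pi.single r 1)).det
      = (Aᵀ.updateRow c (Pi.single r 1)).det := by
    rw [← Matrix.det_transpose (A.updateCol c (Pi.single r 1)), ← Matrix.updateRow_transpose]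
  rw [h1, ← Matrix.adjugate_apply, Matrix.adjugate_fin_succ_eq_det_submatrix]
  rw [← Matrix.transpose_submatrix, Matrix.det_transpose]
  ring_nf

/-- Second equation of the bilinear Bäcklund transformation for the bilinear
q-2DTL equation, verified on Casoratian solutions. -/
theorem stmt_2 (q α β : ℝ) (hq : 0 < q) (hq1 : q ≠ 1) (N : ℕ)
    (f : Fin (N + 1) → ℤ → ℝ → ℝ → ℂ)
    (hdx : ∀ (k : Fin (N + 1)) (n : ℤ) (x y : ℝ), x ≠ 0 → y ≠ 0 →
      qdiffX q α (f k n) x y = -f k (n + 1) x y)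
    (hdy : ∀ (k : Fin (N + 1)) (n : ℤ) (x y : ℝ), x ≠ 0 → y ≠ 0 →
      qdiffY q β (f k n) x y = f k (n - 1) x y)
    (τ τ' : ℤ → ℝ → ℝ → ℂ)
    (hτ : ∀ (n : ℤ) (x y : ℝ),
      τ n x y = Matrix.det (Matrix.of fun k j : Fin N => f k.castSucc (n + (j : ℕ)) x y))
    (hτ' : ∀ (n : ℤ) (x y : ℝ),
      τ' n x y = Matrix.det (Matrix.of fun k j : Fin (N + 1) => f k (n + (j : ℕ)) x y)) :
    ∀ (n : ℤ) (x y : ℝ), x ≠ 0 → y ≠ 0 →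
      qdiffX q α (τ n) x y * τ' (n - 1) x y - qdiffX q α (τ' (n - 1)) x y * τ n x y
        = τ (n - 1) (q ^ α * x) y * τ' n x y := by
  intro n x y hx hy
  set Q : ℝ := q ^ α * x with hQ
  set a : ℂ := (((1 - q) * x : ℝ) : ℂ) with ha
  have ha0 : a ≠ 0 := by
    rw [ha, Complex.ofReal_ne_zero]
    exact mul_ne_zero (sub_ne_zero.mpr (Ne.symm hq1)) hx
  have key : ∀ (k : Fin (N+1)) (m : ℤ), f k m Q y = f k m x y + a * f k (m+1) x y := by
    intro k m
    have h := hdx k m x y hx hy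
    rw [qdiffX] at h
    have h2 := (div_eq_iff ha0).mp h
    linear_combination -h2
  set D : Matrix (Fin (N+2)) (Fin (N+2)) ℂ := Matrix.of fun (i j : Fin (N+2)) =>
    Fin.lastCases ((-a) ^ (N + 1 - (j:ℕ))) (fun i' => f i' (n - 1 + (j:ℕ)) x y) i with hD
  have hr1v : (((Fin.last N).castSucc : Fin (N+2)) : ℕ) = N := by simp
  have hr2v : ((Fin.last (N+1) : Fin (N+2)) : ℕ) = N + 1 := rfl
  -- det D
  have F0 : D.det = τ' (n-1) Q y := by
    rw [hD, hτ', bordered_det a (fun j i' => f i' (n - 1 + (j:ℕ)) x y)]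
    congr 1
    ext i p
    simp only [Matrix.of_apply]
    have e1 : (n - 1 + ((p.castSucc : Fin (N+2)) : ℕ) : ℤ) = n - 1 + (p : ℕ) := by
      simp
    have e2 : (n - 1 + ((p.succ : Fin (N+2)) : ℕ) : ℤ) = n - 1 + (p : ℕ) + 1 := by
      simp only [Fin.val_succ]
      push_cast
      ring
    rw [e1, e2, key]
  have F1 : (D.submatrix ((Fin.last (N+1)).succAbove) ((Fin.last (N+1)).succAbove)).det
      = τ' (n-1) x y := by
    rw [hτ']
    congr 1
    ext k j
    simp only [Fin.succAbove_last, Matrix.submatrix_apply, hD, Matrix.of_apply,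
      Fin.lastCases_castSucc, Fin.coe_castSucc]
  have F2 : (D.submatrix ((Fin.last (N+1)).succAbove) ((0 : Fin (N+2)).succAbove)).det
      = τ' n x y := by
    rw [hτ']
    congr 1
    ext k j
    simp only [Fin.succAbove_last, Fin.succAbove_zero, Matrix.submatrix_apply, hD,
      Matrix.of_apply, Fin.lastCases_castSucc]
    congr 1
    simp only [Fin.val_succ]
    push_cast
    ring
  have hrowlast : ((Fin.last N).castSucc : Fin (N+2)).succAbove (Fin.last N)
      = Fin.last (N+1) := by
    rw [Fin.succAbove_of_le_castSucc _ _ (le_refl _), Fin.succ_last]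
  have hrowcast : ∀ i' : Fin N, ((Fin.last N).castSucc : Fin (N+2)).succAbove i'.castSucc
      = i'.castSucc.castSucc := by
    intro i'
    exact Fin.succAbove_of_castSucc_lt _ _ (by
      rw [Fin.castSucc_lt_castSucc_iff]
      exact Fin.castSucc_lt_last i')
  have F3 : (D.submatrix (((Fin.last N).castSucc : Fin (N+2)).succAbove)
      ((0 : Fin (N+2)).succAbove)).det = τ n Q y := by
    have hsub : D.submatrix (((Fin.last N).castSucc : Fin (N+2)).succAbove)
        ((0 : Fin (N+2)).succAbove)
        = Matrix.of fun (i j : Fin (N+1)) =>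
            Fin.lastCases ((-a) ^ (N - (j:ℕ))) (fun i' => f i'.castSucc (n + (j:ℕ)) x y) i := by
      ext i j
      induction i using Fin.lastCases with
      | last =>
        simp only [Matrix.submatrix_apply, hrowlast, Fin.succAbove_zero, hD,
          Matrix.of_apply, Fin.lastCases_last]
        congr 1
        simp only [Fin.val_succ]
        omega
      | cast i' =>
        simp only [Matrix.submatrix_apply, hrowcast, Fin.succAbove_zero, hD,
          Matrix.of_apply, Fin.lastCases_castSucc]
        congr 1
        simp only [Fin.val_succ]
        push_cast
        ring
    rw [hsub, bordered_det a (fun j i' => f i'.castSucc (n + (j:ℕ)) x y), hτ]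
    congr 1
    ext i p
    simp only [Matrix.of_apply]
    have e1 : (n + ((p.castSucc : Fin (N+1)) : ℕ) : ℤ) = n + (p : ℕ) := by
      simp
    have e2 : (n + ((p.succ : Fin (N+1)) : ℕ) : ℤ) = n + (p : ℕ) + 1 := by
      simp only [Fin.val_succ]
      push_cast
      ring
    rw [e1, e2, key]
  have F4 : (D.submatrix (((Fin.last N).castSucc : Fin (N+2)).succAbove)
      ((Fin.last (N+1)).succAbove)).det = (-a) * τ (n-1) Q y := by
    have hsub : D.submatrix (((Fin.last N).castSucc : Fin (N+2)).succAbove)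
        ((Fin.last (N+1)).succAbove)
        = Matrix.of fun (i j : Fin (N+1)) =>
            Fin.lastCases ((-a) ^ (N + 1 - (j:ℕ)))
              (fun i' => f i'.castSucc (n - 1 + (j:ℕ)) x y) i := by
      ext i j
      induction i using Fin.lastCases with
      | last =>
        simp only [Matrix.submatrix_apply, hrowlast, Fin.succAbove_last, hD,
          Matrix.of_apply, Fin.lastCases_last, Fin.coe_castSucc]
      | cast i' =>
        simp only [Matrix.submatrix_apply, hrowcast, Fin.succAbove_last, hD,
          Matrix.of_apply, Fin.lastCases_castSucc, Fin.coe_castSucc]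
    rw [hsub, bordered_det' a (fun j i' => f i'.castSucc (n - 1 + (j:ℕ)) x y), hτ]
    congr 2
    ext i p
    simp only [Matrix.of_apply]
    have e1 : (n - 1 + ((p.castSucc : Fin (N+1)) : ℕ) : ℤ) = n - 1 + (p : ℕ) := by
      simp
    have e2 : (n - 1 + ((p.succ : Fin (N+1)) : ℕ) : ℤ) = n - 1 + (p : ℕ) + 1 := by
      simp only [Fin.val_succ]
      push_cast
      ring
    rw [e1, e2, key]
  set s : ℂ := (-1:ℂ)^N with hs
  have hs2 : s * s = 1 := by
    rw [hs, ← pow_add, ← two_mul, pow_mul]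
    norm_num
  have F5 : ((D.updateCol (0 : Fin (N+2)) (Pi.single ((Fin.last N).castSucc) 1)).updateCol
      (Fin.last (N+1)) (Pi.single (Fin.last (N+1)) 1)).det = s * τ n x y := by
    rw [adjcol _ (Fin.last (N+1)) (Fin.last (N+1))]
    have hsign1 : ((-1:ℂ)) ^ (((Fin.last (N+1) : Fin (N+2)):ℕ)
        + ((Fin.last (N+1) : Fin (N+2)):ℕ)) = 1 := by
      rw [Fin.val_last, ← two_mul, pow_mul]
      norm_num
    rw [hsign1, one_mul]
    have hcomm : ((D.updateCol (0 : Fin (N+2))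
          (Pi.single ((Fin.last N).castSucc) 1)).submatrix
          ((Fin.last (N+1)).succAbove) ((Fin.last (N+1)).succAbove))
        = (D.submatrix Fin.castSucc Fin.castSucc).updateCol (0 : Fin (N+1))
            (Pi.single (Fin.last N) 1) := by
      ext i j
      simp only [Fin.succAbove_last, Matrix.submatrix_apply, Matrix.updateCol_apply]
      by_cases hj : j = 0
      · subst hj
        rw [if_pos (by simp), if_pos rfl]
        by_cases hi : i = Fin.last N
        · subst hi
          simp
        · rw [Pi.single_eq_of_ne (fun h => hi (Fin.castSucc_injective _ h)),
            Pi.single_eq_of_ne hi]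
      · rw [if_neg (by
          simp only [Fin.castSucc_eq_zero_iff]
          exact hj), if_neg hj]
    rw [hcomm, adjcol _ (Fin.last N) (0 : Fin (N+1)), Matrix.submatrix_submatrix]
    have hsign2 : ((-1:ℂ)) ^ (((Fin.last N : Fin (N+1)):ℕ) + (((0 : Fin (N+1))):ℕ))
        = s := by
      rw [hs, Fin.val_last, Fin.val_zero, Nat.add_zero]
    rw [hsign2, hτ]
    congr 2
    ext i j
    simp only [Matrix.submatrix_apply, Function.comp_apply, Fin.succAbove_last,
      Fin.succAbove_zero, hD, Matrix.of_apply, Fin.lastCases_castSucc]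
    congr 1
    simp only [Fin.val_succ, Fin.coe_castSucc]
    push_cast
    ring
  have hcne : (0 : Fin (N+2)) ≠ Fin.last (N+1) := by
    intro h
    have := congrArg Fin.val h
    simp at this
  have hjac := jacobi D ((Fin.last N).castSucc) (Fin.last (N+1)) (0 : Fin (N+2))
    (Fin.last (N+1)) hcne
  have hadj11 : adjugate D (0 : Fin (N+2)) ((Fin.last N).castSucc) = s * τ n Q y := by
    rw [Matrix.adjugate_fin_succ_eq_det_submatrix, F3]
    have h1 : (((Fin.last N).castSucc : Fin (N+2)) : ℕ) + (((0 : Fin (N+2))) : ℕ) = N := by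
      simp
    rw [h1, ← hs]
  have hadj22 : adjugate D (Fin.last (N+1)) (Fin.last (N+1)) = τ' (n-1) x y := by
    rw [Matrix.adjugate_fin_succ_eq_det_submatrix, F1]
    have h1 : ((-1:ℂ)) ^ (((Fin.last (N+1) : Fin (N+2)):ℕ)
        + ((Fin.last (N+1) : Fin (N+2)):ℕ)) = 1 := by
      rw [Fin.val_last, ← two_mul, pow_mul]
      norm_num
    rw [h1, one_mul]
  have hadj21 : adjugate D (Fin.last (N+1)) ((Fin.last N).castSucc) = a * τ (n-1) Q y := by
    rw [Matrix.adjugate_fin_succ_eq_det_submatrix, F4]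
    have h1 : ((-1:ℂ)) ^ ((((Fin.last N).castSucc : Fin (N+2)):ℕ)
        + ((Fin.last (N+1) : Fin (N+2)):ℕ)) = -1 := by
      rw [hr1v, hr2v]
      have h2 : N + (N + 1) = 2 * N + 1 := by ring
      rw [h2, pow_succ, pow_mul]
      norm_num
    rw [h1]
    ring
  have hadj12 : adjugate D (0 : Fin (N+2)) (Fin.last (N+1)) = -(s * τ' n x y) := by
    rw [Matrix.adjugate_fin_succ_eq_det_submatrix, F2]
    have h1 : ((-1:ℂ)) ^ (((Fin.last (N+1) : Fin (N+2)):ℕ) + (((0 : Fin (N+2))):ℕ))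
        = -s := by
      rw [hr2v, Fin.val_zero, Nat.add_zero, hs, pow_succ]
      ring
    rw [h1]
    ring
  rw [hadj11, hadj22, hadj21, hadj12, F0, F5] at hjac
  have key2 : τ n Q y * τ' (n-1) x y + a * (τ (n-1) Q y * τ' n x y)
      = τ' (n-1) Q y * τ n x y := by
    linear_combination s * hjac + (-(τ n Q y * τ' (n-1) x y + a * (τ (n-1) Q y * τ' n x y)
      - τ' (n-1) Q y * τ n x y)) * hs2
  rw [qdiffX, qdiffX, ← hQ, ← ha, div_mul_eq_mul_div, div_mul_eq_mul_div, div_sub_div_same,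
    div_eq_iff ha0]
  linear_combination -key2
end

section
/- Let (X_n)_{n∈ℤ} be a sequence of matrix-valued functions on {(x,y) : x ≠ 0, y ≠ 0} whose values are invertible matrices, and define V_n = σ₂(X_{n+1})X_n⁻¹ and J_n = D₁(X_n)X_n⁻¹. Then the equation D₁(V_n) = σ₂(J_{n+1})V_n − σ₁(V_n)J_n holds identically for every n and every x ≠ 0, y ≠ 0; moreover, the equation D₂(J_n) = V_n − σ₁(V_{n−1}) holds for every n, x ≠ 0, y ≠ 0 if and only if (X_n) satisfies the noncommutative q-2DTL equation D₂(D₁(X_n)X_n⁻¹) = σ₂(X_{n+1})X_n⁻¹ − σ₁(σ₂(X_n)X_{n−1}⁻¹). -/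
/-- The q-shift homomorphism in `x` on matrix-valued functions. -/
noncomputable def msig1 (q α : ℝ) {m : ℕ} (f : ℝ → ℝ → Matrix (Fin m) (Fin m) ℂ) :
    ℝ → ℝ → Matrix (Fin m) (Fin m) ℂ :=
  fun x y => f (q ^ α * x) y

/-- The q-shift homomorphism in `y` on matrix-valued functions. -/
noncomputable def msig2 (q β : ℝ) {m : ℕ} (f : ℝ → ℝ → Matrix (Fin m) (Fin m) ℂ) :
    ℝ → ℝ → Matrix (Fin m) (Fin m) ℂ :=
  fun x y => f x (q ^ β * y)

/-- The q-difference operator in `x` on matrix-valued functions. -/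
noncomputable def mD1 (q α : ℝ) {m : ℕ} (f : ℝ → ℝ → Matrix (Fin m) (Fin m) ℂ) :
    ℝ → ℝ → Matrix (Fin m) (Fin m) ℂ :=
  fun x y => ((1 - q) * x)⁻¹ • (f x y - f (q ^ α * x) y)

/-- The q-difference operator in `y` on matrix-valued functions. -/
noncomputable def mD2 (q β : ℝ) {m : ℕ} (f : ℝ → ℝ → Matrix (Fin m) (Fin m) ℂ) :
    ℝ → ℝ → Matrix (Fin m) (Fin m) ℂ :=
  fun x y => ((1 - q) * y)⁻¹ • (f x y - f x (q ^ β * y))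

/-- Key noncommutative-ring identity used for the first compatibility equation. -/
lemma key_ring {R : Type*} [Ring R] (A B C E Ai Bi Ci : R)
    (hA : A * Ai = 1) (hB : Bi * B = 1) (hC : Ci * C = 1) :
    (C - E) * Ci * (C * Ai) - E * Bi * ((A - B) * Ai) = C * Ai - E * Bi := by
  have e1 : (C - E) * Ci * (C * Ai) = (C - E) * Ai := by
    rw [mul_assoc, ← mul_assoc Ci, hC, one_mul]
  have e2 : E * Bi * ((A - B) * Ai) = E * Bi - E * Ai := by
    rw [sub_mul, mul_sub, mul_assoc, ← mul_assoc Bi A, mul_assoc Bi A,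
      hA, mul_one, mul_assoc, ← mul_assoc Bi B, hB, one_mul]
  rw [e1, e2, sub_mul]
  abel

/-- The Lax pair compatibility for the noncommutative q-2DTL equation:
with `V_n = σ₂(X_{n+1})X_n⁻¹` and `J_n = D₁(X_n)X_n⁻¹`, the first compatibility
equation holds identically, and the second is equivalent to the nc q-2DTL
equation for `X`. -/
theorem stmt_3 (q α β : ℝ) (hq : 0 < q) (hq1 : q ≠ 1) (m : ℕ) (hm : 1 ≤ m)
    (X : ℤ → ℝ → ℝ → Matrix (Fin m) (Fin m) ℂ)
    (hXinv : ∀ (n : ℤ) (x y : ℝ), IsUnit (X n x y))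
    (V J : ℤ → ℝ → ℝ → Matrix (Fin m) (Fin m) ℂ)
    (hV : ∀ (n : ℤ) (x y : ℝ), V n x y = X (n + 1) x (q ^ β * y) * (X n x y)⁻¹)
    (hJ : ∀ (n : ℤ) (x y : ℝ), J n x y = mD1 q α (X n) x y * (X n x y)⁻¹) :
    (∀ (n : ℤ) (x y : ℝ), x ≠ 0 → y ≠ 0 →
        mD1 q α (V n) x y
          = J (n + 1) x (q ^ β * y) * V n x y - V n (q ^ α * x) y * J n x y)
      ∧ ((∀ (n : ℤ) (x y : ℝ), x ≠ 0 → y ≠ 0 →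
            mD2 q β (J n) x y = V n x y - V (n - 1) (q ^ α * x) y)
          ↔ (∀ (n : ℤ) (x y : ℝ), x ≠ 0 → y ≠ 0 →
            mD2 q β (fun u v => mD1 q α (X n) u v * (X n u v)⁻¹) x y
              = X (n + 1) x (q ^ β * y) * (X n x y)⁻¹
                - X n (q ^ α * x) (q ^ β * y) * (X (n - 1) (q ^ α * x) y)⁻¹)) := by
  have hdet : ∀ (n : ℤ) (x y : ℝ), IsUnit (X n x y).det := fun n x y =>
    (Matrix.isUnit_iff_isUnit_det _).mp (hXinv n x y)
  constructor
  · intro n x y hx hy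
    set A := X n x y
    set B := X n (q ^ α * x) y
    set C := X (n + 1) x (q ^ β * y)
    set E := X (n + 1) (q ^ α * x) (q ^ β * y)
    have hA : A * A⁻¹ = 1 := Matrix.mul_nonsing_inv _ (hdet n x y)
    have hB : B⁻¹ * B = 1 := Matrix.nonsing_inv_mul _ (hdet n (q ^ α * x) y)
    have hC : C⁻¹ * C = 1 := Matrix.nonsing_inv_mul _ (hdet (n + 1) x (q ^ β * y))
    have hkey := key_ring A B C E A⁻¹ B⁻¹ C⁻¹ hA hB hC
    simp only [mD1, hV, hJ]
    simp only [smul_mul_assoc, mul_smul_comm, ← smul_sub]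
    rw [hkey]
  · have hL : ∀ (n : ℤ) (x y : ℝ),
        mD2 q β (J n) x y
          = mD2 q β (fun u v => mD1 q α (X n) u v * (X n u v)⁻¹) x y := by
      intro n x y
      simp only [mD2, hJ]
    have hR : ∀ (n : ℤ) (x y : ℝ),
        V n x y - V (n - 1) (q ^ α * x) y
          = X (n + 1) x (q ^ β * y) * (X n x y)⁻¹
            - X n (q ^ α * x) (q ^ β * y) * (X (n - 1) (q ^ α * x) y)⁻¹ := by
      intro n x y
      rw [hV, hV]
      norm_num
    constructor
    · intro h n x y hx hy
      rw [← hL, ← hR]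
      exact h n x y hx hy
    · intro h n x y hx hy
      rw [hL, hR]
      exact h n x y hx hy
end

section
/- Let (V_n), (J_n) be sequences of matrix-valued functions on {(x,y) : x ≠ 0, y ≠ 0}, and let (θ_n) and (φ_n) both satisfy the Lax pair D₂(θ_{n+1}) = V_n θ_n, D₁(θ_n) = −θ_{n+1} + J_n θ_n and D₂(φ_{n+1}) = V_n φ_n, D₁(φ_n) = −φ_{n+1} + J_n φ_n for all n, with every value θ_n(x,y) an invertible matrix. Define φ̃_n = −φ_{n+1} + θ_{n+1}θ_n⁻¹φ_n, Ṽ_n = σ₂(θ_{n+2}θ_{n+1}⁻¹)·V_n·θ_nθ_{n+1}⁻¹ and J̃_n = J_{n+1} + σ₁(θ_{n+1}θ_n⁻¹) − θ_{n+2}θ_{n+1}⁻¹. Then (φ̃_n) satisfies the transformed Lax pair: D₂(φ̃_{n+1}) = Ṽ_n φ̃_n and D₁(φ̃_n) = −φ̃_{n+1} + J̃_n φ̃_n for all n and all x ≠ 0, y ≠ 0. -/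
lemma aux1 {M : Type*} [Ring M] [Module ℝ M] [IsScalarTower ℝ M M] [SMulCommClass ℝ M M]
    (k : ℝ) (an a1 a2 bn b1 b2 vn c d ian ia1 ic b1' b2' : M)
    (hani : ∀ X, ian * (an * X) = X)
    (ha1i : ∀ X, ia1 * (a1 * X) = X)
    (ha1a : ∀ X, a1 * (ia1 * X) = X)
    (hci : ∀ X, ic * (c * X) = X)
    (hvn : k • vn = (a1 - c) * ian)
    (hb1' : b1' = b1 - (a1 - c) * (ian * bn))
    (hb2' : b2' = b2 - (a2 - d) * (ia1 * b1)) :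
    (-b2 + a2 * ia1 * b1) - (-b2' + d * ic * b1')
      = k • (d * ic * vn * (an * ia1) * (-b1 + a1 * ian * bn)) := by
  have hr : k • (d * ic * vn * (an * ia1) * (-b1 + a1 * ian * bn))
      = d * (ic * ((k • vn) * (an * (ia1 * (-b1 + a1 * (ian * bn)))))) := by
    simp only [smul_mul_assoc, mul_smul_comm, mul_assoc]
  rw [hr, hvn, hb1', hb2']
  simp only [mul_add, add_mul, mul_sub, sub_mul, mul_neg, neg_mul, mul_assoc,
    hani, ha1i, ha1a, hci]
  abel

lemma aux2 {M : Type*} [Ring M] [Module ℝ M] [IsScalarTower ℝ M M] [SMulCommClass ℝ M M]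
    (l : ℝ) (an a1 a2 bn b1 b2 jn j1 p qq ian ia1 ip bn2 b12 : M)
    (hana : ∀ X, an * (ian * X) = X)
    (ha1i : ∀ X, ia1 * (a1 * X) = X)
    (hpi : ∀ X, ip * (p * X) = X)
    (hp : p = an + l • a1 - l • (jn * an))
    (hq : qq = a1 + l • a2 - l • (j1 * a1))
    (hbn2 : bn2 = bn + l • b1 - l • (jn * bn))
    (hb12 : b12 = b1 + l • b2 - l • (j1 * b1)) :
    (-b1 + a1 * ian * bn) - (-b12 + qq * ip * bn2)
      = l • (-(-b2 + a2 * ia1 * b1) + (j1 + qq * ip - a2 * ia1) * (-b1 + a1 * ian * bn)) := by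
  have key : p * (ian * bn) = bn + l • (a1 * (ian * bn)) - l • (jn * bn) := by
    rw [hp]
    simp only [add_mul, sub_mul, smul_mul_assoc, mul_assoc, hana]
  have h2 : qq * ip * bn2
      = qq * (ian * bn) + l • (qq * (ip * b1)) - l • (qq * (ip * (a1 * (ian * bn)))) := by
    have hbn2' : bn2 = p * (ian * bn) + l • b1 - l • (a1 * (ian * bn)) := by
      rw [key, hbn2]; abel
    rw [hbn2', mul_assoc]
    simp only [mul_add, mul_sub, mul_smul_comm, hpi]
  have h3 : l • (a2 * (ian * bn))
      = qq * (ian * bn) - a1 * (ian * bn) + l • (j1 * (a1 * (ian * bn))) := by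
    have hla2 : l • a2 = qq - a1 + l • (j1 * a1) := by rw [hq]; abel
    calc l • (a2 * (ian * bn)) = (l • a2) * (ian * bn) := by rw [smul_mul_assoc]
      _ = (qq - a1 + l • (j1 * a1)) * (ian * bn) := by rw [hla2]
      _ = _ := by simp only [add_mul, sub_mul, smul_mul_assoc, mul_assoc]
  rw [hb12, h2]
  simp only [mul_add, add_mul, mul_sub, sub_mul, mul_neg, neg_mul, smul_add, smul_sub,
    smul_neg, mul_assoc, ha1i]
  rw [h3]
  abel

/-- The Darboux transformation for the noncommutative q-2DTL Lax pair maps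
eigenfunctions to eigenfunctions of the transformed Lax pair. -/
theorem stmt_4 (q α β : ℝ) (hq : 0 < q) (hq1 : q ≠ 1) (m : ℕ) (hm : 1 ≤ m)
    (V J θ φ : ℤ → ℝ → ℝ → Matrix (Fin m) (Fin m) ℂ)
    (hθ2 : ∀ (n : ℤ) (x y : ℝ), x ≠ 0 → y ≠ 0 →
      mD2 q β (θ (n + 1)) x y = V n x y * θ n x y)
    (hθ1 : ∀ (n : ℤ) (x y : ℝ), x ≠ 0 → y ≠ 0 →
      mD1 q α (θ n) x y = -θ (n + 1) x y + J n x y * θ n x y)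
    (hφ2 : ∀ (n : ℤ) (x y : ℝ), x ≠ 0 → y ≠ 0 →
      mD2 q β (φ (n + 1)) x y = V n x y * φ n x y)
    (hφ1 : ∀ (n : ℤ) (x y : ℝ), x ≠ 0 → y ≠ 0 →
      mD1 q α (φ n) x y = -φ (n + 1) x y + J n x y * φ n x y)
    (hθinv : ∀ (n : ℤ) (x y : ℝ), IsUnit (θ n x y))
    (φt Vt Jt : ℤ → ℝ → ℝ → Matrix (Fin m) (Fin m) ℂ)
    (hφt : ∀ (n : ℤ) (x y : ℝ),
      φt n x y = -φ (n + 1) x y + θ (n + 1) x y * (θ n x y)⁻¹ * φ n x y)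
    (hVt : ∀ (n : ℤ) (x y : ℝ),
      Vt n x y = (θ (n + 2) x (q ^ β * y) * (θ (n + 1) x (q ^ β * y))⁻¹)
        * V n x y * (θ n x y * (θ (n + 1) x y)⁻¹))
    (hJt : ∀ (n : ℤ) (x y : ℝ),
      Jt n x y = J (n + 1) x y + θ (n + 1) (q ^ α * x) y * (θ n (q ^ α * x) y)⁻¹
        - θ (n + 2) x y * (θ (n + 1) x y)⁻¹) :
    ∀ (n : ℤ) (x y : ℝ), x ≠ 0 → y ≠ 0 →
      mD2 q β (φt (n + 1)) x y = Vt n x y * φt n x y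
        ∧ mD1 q α (φt n) x y = -φt (n + 1) x y + Jt n x y * φt n x y := by

  intro n x y hx hy
  have hq' : (1 : ℝ) - q ≠ 0 := sub_ne_zero.mpr (Ne.symm hq1)
  have hk : (1 - q) * y ≠ 0 := mul_ne_zero hq' hy
  have hl : (1 - q) * x ≠ 0 := mul_ne_zero hq' hx
  -- inverse cancellation lemmas
  have hdet : ∀ (n' : ℤ) (x' y' : ℝ), IsUnit (θ n' x' y').det := fun n' x' y' =>
    (Matrix.isUnit_iff_isUnit_det _).mp (hθinv n' x' y')
  have hcl : ∀ (n' : ℤ) (x' y' : ℝ) (X : Matrix (Fin m) (Fin m) ℂ),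
      (θ n' x' y')⁻¹ * (θ n' x' y' * X) = X := fun n' x' y' X => by
    rw [← mul_assoc, Matrix.nonsing_inv_mul _ (hdet n' x' y'), one_mul]
  have hcr : ∀ (n' : ℤ) (x' y' : ℝ) (X : Matrix (Fin m) (Fin m) ℂ),
      θ n' x' y' * ((θ n' x' y')⁻¹ * X) = X := fun n' x' y' X => by
    rw [← mul_assoc, Matrix.mul_nonsing_inv _ (hdet n' x' y'), one_mul]
  have hmi : ∀ (n' : ℤ) (x' y' : ℝ),
      θ n' x' y' * (θ n' x' y')⁻¹ = 1 := fun n' x' y' =>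
    Matrix.mul_nonsing_inv _ (hdet n' x' y')
  have hidx : n + 1 + 1 = n + 2 := by ring
  -- shift relations
  have hSθ : ∀ n' : ℤ, θ (n' + 1) x y - θ (n' + 1) x (q ^ β * y)
      = ((1 - q) * y) • (V n' x y * θ n' x y) := by
    intro n'
    have h := hθ2 n' x y hx hy
    simp only [mD2] at h
    rwa [inv_smul_eq_iff₀ hk] at h
  have hSφ : ∀ n' : ℤ, φ (n' + 1) x y - φ (n' + 1) x (q ^ β * y)
      = ((1 - q) * y) • (V n' x y * φ n' x y) := by
    intro n'
    have h := hφ2 n' x y hx hy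
    simp only [mD2] at h
    rwa [inv_smul_eq_iff₀ hk] at h
  have hSθ1 : ∀ n' : ℤ, θ n' x y - θ n' (q ^ α * x) y
      = ((1 - q) * x) • (-θ (n' + 1) x y + J n' x y * θ n' x y) := by
    intro n'
    have h := hθ1 n' x y hx hy
    simp only [mD1] at h
    rwa [inv_smul_eq_iff₀ hl] at h
  have hSφ1 : ∀ n' : ℤ, φ n' x y - φ n' (q ^ α * x) y
      = ((1 - q) * x) • (-φ (n' + 1) x y + J n' x y * φ n' x y) := by
    intro n'
    have h := hφ1 n' x y hx hy
    simp only [mD1] at h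
    rwa [inv_smul_eq_iff₀ hl] at h
  constructor
  · -- first equation
    simp only [mD2]
    rw [inv_smul_eq_iff₀ hk]
    simp only [hφt, hVt, hidx]
    -- smul-free substitutions
    have hvn : ((1 - q) * y) • V n x y
        = (θ (n + 1) x y - θ (n + 1) x (q ^ β * y)) * (θ n x y)⁻¹ := by
      rw [hSθ n, smul_mul_assoc, mul_assoc, hmi n x y, mul_one]
    have hb1' : φ (n + 1) x (q ^ β * y)
        = φ (n + 1) x y - (θ (n + 1) x y - θ (n + 1) x (q ^ β * y))
            * ((θ n x y)⁻¹ * φ n x y) := by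
      have e : ((1 - q) * y) • (V n x y * φ n x y)
          = (θ (n + 1) x y - θ (n + 1) x (q ^ β * y)) * ((θ n x y)⁻¹ * φ n x y) := by
        rw [← smul_mul_assoc, hvn, mul_assoc]
      rw [← e, ← hSφ n]; abel
    have hb2' : φ (n + 2) x (q ^ β * y)
        = φ (n + 2) x y - (θ (n + 2) x y - θ (n + 2) x (q ^ β * y))
            * ((θ (n + 1) x y)⁻¹ * φ (n + 1) x y) := by
      have hv1 : ((1 - q) * y) • V (n + 1) x y
          = (θ (n + 2) x y - θ (n + 2) x (q ^ β * y)) * (θ (n + 1) x y)⁻¹ := by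
        have h := hSθ (n + 1); rw [hidx] at h
        rw [h, smul_mul_assoc, mul_assoc, hmi (n + 1) x y, mul_one]
      have e : ((1 - q) * y) • (V (n + 1) x y * φ (n + 1) x y)
          = (θ (n + 2) x y - θ (n + 2) x (q ^ β * y))
              * ((θ (n + 1) x y)⁻¹ * φ (n + 1) x y) := by
        rw [← smul_mul_assoc, hv1, mul_assoc]
      have h := hSφ (n + 1); rw [hidx] at h
      rw [← e, ← h]; abel
    exact aux1 ((1 - q) * y) (θ n x y) (θ (n + 1) x y) (θ (n + 2) x y)
      (φ n x y) (φ (n + 1) x y) (φ (n + 2) x y) (V n x y)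
      (θ (n + 1) x (q ^ β * y)) (θ (n + 2) x (q ^ β * y))
      (θ n x y)⁻¹ (θ (n + 1) x y)⁻¹ (θ (n + 1) x (q ^ β * y))⁻¹
      (φ (n + 1) x (q ^ β * y)) (φ (n + 2) x (q ^ β * y))
      (hcl n x y) (hcl (n + 1) x y) (hcr (n + 1) x y) (hcl (n + 1) x (q ^ β * y))
      hvn hb1' hb2'
  · -- second equation
    simp only [mD1]
    rw [inv_smul_eq_iff₀ hl]
    simp only [hφt, hJt, hidx]
    have hp : θ n (q ^ α * x) y
        = θ n x y + ((1 - q) * x) • θ (n + 1) x y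
          - ((1 - q) * x) • (J n x y * θ n x y) := by
      rw [← sub_sub_cancel (θ n x y) (θ n (q ^ α * x) y), hSθ1 n, smul_add, smul_neg]
      abel
    have hqq : θ (n + 1) (q ^ α * x) y
        = θ (n + 1) x y + ((1 - q) * x) • θ (n + 2) x y
          - ((1 - q) * x) • (J (n + 1) x y * θ (n + 1) x y) := by
      have h := hSθ1 (n + 1); rw [hidx] at h
      rw [← sub_sub_cancel (θ (n + 1) x y) (θ (n + 1) (q ^ α * x) y), h, smul_add, smul_neg]
      abel
    have hbn2 : φ n (q ^ α * x) y
        = φ n x y + ((1 - q) * x) • φ (n + 1) x y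
          - ((1 - q) * x) • (J n x y * φ n x y) := by
      rw [← sub_sub_cancel (φ n x y) (φ n (q ^ α * x) y), hSφ1 n, smul_add, smul_neg]
      abel
    have hb12 : φ (n + 1) (q ^ α * x) y
        = φ (n + 1) x y + ((1 - q) * x) • φ (n + 2) x y
          - ((1 - q) * x) • (J (n + 1) x y * φ (n + 1) x y) := by
      have h := hSφ1 (n + 1); rw [hidx] at h
      rw [← sub_sub_cancel (φ (n + 1) x y) (φ (n + 1) (q ^ α * x) y), h, smul_add, smul_neg]
      abel
    exact aux2 ((1 - q) * x) (θ n x y) (θ (n + 1) x y) (θ (n + 2) x y)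
      (φ n x y) (φ (n + 1) x y) (φ (n + 2) x y) (J n x y) (J (n + 1) x y)
      (θ n (q ^ α * x) y) (θ (n + 1) (q ^ α * x) y)
      (θ n x y)⁻¹ (θ (n + 1) x y)⁻¹ (θ n (q ^ α * x) y)⁻¹
      (φ n (q ^ α * x) y) (φ (n + 1) (q ^ α * x) y)
      (hcr n x y) (hcl (n + 1) x y) (hcl n (q ^ α * x) y)
      hp hqq hbn2 hb12
end

section
/- Let (X_n) be a sequence of matrix-valued functions on {(x,y) : x ≠ 0, y ≠ 0} with invertible values satisfying the noncommutative q-2DTL equation D₂(D₁(X_n)X_n⁻¹) = σ₂(X_{n+1})X_n⁻¹ − σ₁(σ₂(X_n)X_{n−1}⁻¹), set V_n = σ₂(X_{n+1})X_n⁻¹ and J_n = D₁(X_n)X_n⁻¹, and let (θ_n) satisfy the Lax pair D₂(θ_{n+1}) = V_n θ_n and D₁(θ_n) = −θ_{n+1} + J_n θ_n with every value θ_n(x,y) invertible. Define X̃_n = −θ_{n+1}θ_n⁻¹X_n, Ṽ_n = σ₂(θ_{n+2}θ_{n+1}⁻¹)·V_n·θ_nθ_{n+1}⁻¹ and J̃_n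 = J_{n+1} + σ₁(θ_{n+1}θ_n⁻¹) − θ_{n+2}θ_{n+1}⁻¹. Then Ṽ_n = σ₂(X̃_{n+1})X̃_n⁻¹ and J̃_n = D₁(X̃_n)X̃_n⁻¹ for all n, and consequently (X̃_n) also satisfies the noncommutative q-2DTL equation. -/
/-- helper: recover a difference equation from a q-difference equation -/
lemma smul_eq_of_inv_smul_eq {m : ℕ} {c : ℝ} (hc : c ≠ 0) {A B : Matrix (Fin m) (Fin m) ℂ}
    (h : c⁻¹ • A = B) : A = c • B := by
  rw [← h, smul_smul, mul_inv_cancel₀ hc, one_smul]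

/-- algebra core of the V-claim -/
lemma aux_V {m : ℕ} (a b c d e f : Matrix (Fin m) (Fin m) ℂ)
    (hd : IsUnit d.det) (he : IsUnit e.det) (hf : IsUnit f.det) :
    -(a * b⁻¹ * c) * (-(f * e⁻¹ * d))⁻¹ = a * b⁻¹ * (c * d⁻¹) * (e * f⁻¹) := by
  have h1 : (-(f * e⁻¹ * d))⁻¹ = -(d⁻¹ * (e * f⁻¹)) := by
    apply Matrix.inv_eq_right_inv
    rw [neg_mul_neg]
    calc f * e⁻¹ * d * (d⁻¹ * (e * f⁻¹))
        = f * (e⁻¹ * (d * (d⁻¹ * (e * f⁻¹)))) := by simp only [Matrix.mul_assoc]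
      _ = f * (e⁻¹ * (e * f⁻¹)) := by rw [Matrix.mul_nonsing_inv_cancel_left d (e * f⁻¹) hd]
      _ = f * f⁻¹ := by rw [Matrix.nonsing_inv_mul_cancel_left e (f⁻¹) he]
      _ = 1 := Matrix.mul_nonsing_inv f hf
  rw [h1, neg_mul_neg]
  simp only [Matrix.mul_assoc]

/-- algebra core of the J-claim -/
lemma aux_J {m : ℕ} (t : ℝ) (ht : t ≠ 0)
    (θn θn1 θn2 θhn θhn1 Xn Xhn Jn Jn1 : Matrix (Fin m) (Fin m) ℂ)
    (hθn : IsUnit θn.det) (hθn1 : IsUnit θn1.det) (hθhn : IsUnit θhn.det)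
    (hXn : IsUnit Xn.det)
    (r1 : θn - θhn = t • (-θn1 + Jn * θn))
    (r2 : θn1 - θhn1 = t • (-θn2 + Jn1 * θn1))
    (r3 : Xn - Xhn = t • (Jn * Xn)) :
    Jn1 + θhn1 * θhn⁻¹ - θn2 * θn1⁻¹
      = (t⁻¹ • (-(θn1 * θn⁻¹ * Xn) - -(θhn1 * θhn⁻¹ * Xhn))) * (-(θn1 * θn⁻¹ * Xn))⁻¹ := by
  have hBinv : (-(θn1 * θn⁻¹ * Xn))⁻¹ = -(Xn⁻¹ * (θn * θn1⁻¹)) := by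
    apply Matrix.inv_eq_right_inv
    rw [neg_mul_neg]
    calc θn1 * θn⁻¹ * Xn * (Xn⁻¹ * (θn * θn1⁻¹))
        = θn1 * (θn⁻¹ * (Xn * (Xn⁻¹ * (θn * θn1⁻¹)))) := by simp only [Matrix.mul_assoc]
      _ = θn1 * (θn⁻¹ * (θn * θn1⁻¹)) := by
          rw [Matrix.mul_nonsing_inv_cancel_left Xn (θn * θn1⁻¹) hXn]
      _ = θn1 * θn1⁻¹ := by rw [Matrix.nonsing_inv_mul_cancel_left θn (θn1⁻¹) hθn]
      _ = 1 := Matrix.mul_nonsing_inv θn1 hθn1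
  have hXX : Xhn * Xn⁻¹ = 1 - t • Jn := by
    calc Xhn * Xn⁻¹ = (Xn - (Xn - Xhn)) * Xn⁻¹ := by rw [sub_sub_cancel]
      _ = Xn * Xn⁻¹ - (Xn - Xhn) * Xn⁻¹ := by rw [Matrix.sub_mul]
      _ = 1 - (t • (Jn * Xn)) * Xn⁻¹ := by rw [Matrix.mul_nonsing_inv Xn hXn, r3]
      _ = 1 - t • Jn := by
          rw [smul_mul_assoc, Matrix.mul_nonsing_inv_cancel_right Xn Jn hXn]
  have hr1' : t • (Jn * θn) = θn - θhn + t • θn1 := by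
    rw [r1, smul_add, smul_neg]; abel
  have h5 : Xhn * (Xn⁻¹ * (θn * θn1⁻¹)) = θhn * θn1⁻¹ - t • (1 : Matrix (Fin m) (Fin m) ℂ) := by
    have e1 : Xhn * (Xn⁻¹ * (θn * θn1⁻¹)) = (Xhn * Xn⁻¹) * (θn * θn1⁻¹) := by
      rw [Matrix.mul_assoc]
    have h6 : t • (Jn * (θn * θn1⁻¹)) = θn * θn1⁻¹ - θhn * θn1⁻¹ + t • (1 : Matrix (Fin m) (Fin m) ℂ) := by
      have e2 : Jn * (θn * θn1⁻¹) = (Jn * θn) * θn1⁻¹ := by rw [Matrix.mul_assoc]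
      rw [e2, ← smul_mul_assoc, hr1', Matrix.add_mul, Matrix.sub_mul, smul_mul_assoc,
        Matrix.mul_nonsing_inv θn1 hθn1]
    rw [e1, hXX, Matrix.sub_mul, Matrix.one_mul, smul_mul_assoc, h6]
    abel
  have hBC : (θn1 * θn⁻¹ * Xn) * (Xn⁻¹ * (θn * θn1⁻¹)) = 1 := by
    calc θn1 * θn⁻¹ * Xn * (Xn⁻¹ * (θn * θn1⁻¹))
        = θn1 * (θn⁻¹ * (Xn * (Xn⁻¹ * (θn * θn1⁻¹)))) := by simp only [Matrix.mul_assoc]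
      _ = θn1 * (θn⁻¹ * (θn * θn1⁻¹)) := by
          rw [Matrix.mul_nonsing_inv_cancel_left Xn (θn * θn1⁻¹) hXn]
      _ = θn1 * θn1⁻¹ := by rw [Matrix.nonsing_inv_mul_cancel_left θn (θn1⁻¹) hθn]
      _ = 1 := Matrix.mul_nonsing_inv θn1 hθn1
  have hBhC : (θhn1 * θhn⁻¹ * Xhn) * (Xn⁻¹ * (θn * θn1⁻¹))
      = θhn1 * θn1⁻¹ - t • (θhn1 * θhn⁻¹) := by
    calc (θhn1 * θhn⁻¹ * Xhn) * (Xn⁻¹ * (θn * θn1⁻¹))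
        = θhn1 * (θhn⁻¹ * (Xhn * (Xn⁻¹ * (θn * θn1⁻¹)))) := by simp only [Matrix.mul_assoc]
      _ = θhn1 * (θhn⁻¹ * (θhn * θn1⁻¹ - t • 1)) := by rw [h5]
      _ = θhn1 * (θhn⁻¹ * (θhn * θn1⁻¹)) - t • (θhn1 * θhn⁻¹) := by
          rw [Matrix.mul_sub, Matrix.mul_sub, mul_smul_comm, mul_smul_comm, mul_one]
      _ = θhn1 * θn1⁻¹ - t • (θhn1 * θhn⁻¹) := by
          rw [Matrix.nonsing_inv_mul_cancel_left θhn (θn1⁻¹) hθhn]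
  have h7 : (1 : Matrix (Fin m) (Fin m) ℂ) - θhn1 * θn1⁻¹ = t • (-(θn2 * θn1⁻¹) + Jn1) := by
    have e3 : (1 : Matrix (Fin m) (Fin m) ℂ) - θhn1 * θn1⁻¹ = (θn1 - θhn1) * θn1⁻¹ := by
      rw [Matrix.sub_mul, Matrix.mul_nonsing_inv θn1 hθn1]
    rw [e3, r2, smul_mul_assoc, Matrix.add_mul, Matrix.neg_mul,
      Matrix.mul_nonsing_inv_cancel_right θn1 Jn1 hθn1]
  have key : (θn1 * θn⁻¹ * Xn - θhn1 * θhn⁻¹ * Xhn) * (Xn⁻¹ * (θn * θn1⁻¹))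
      = t • (Jn1 + θhn1 * θhn⁻¹ - θn2 * θn1⁻¹) := by
    rw [Matrix.sub_mul, hBC, hBhC]
    calc (1 : Matrix (Fin m) (Fin m) ℂ) - (θhn1 * θn1⁻¹ - t • (θhn1 * θhn⁻¹))
        = (1 - θhn1 * θn1⁻¹) + t • (θhn1 * θhn⁻¹) := by abel
      _ = t • (-(θn2 * θn1⁻¹) + Jn1) + t • (θhn1 * θhn⁻¹) := by rw [h7]
      _ = t • (Jn1 + θhn1 * θhn⁻¹ - θn2 * θn1⁻¹) := by
          rw [← smul_add]; congr 1; abel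
  rw [hBinv]
  rw [show -(θn1 * θn⁻¹ * Xn) - -(θhn1 * θhn⁻¹ * Xhn)
      = -(θn1 * θn⁻¹ * Xn - θhn1 * θhn⁻¹ * Xhn) from by abel]
  rw [smul_neg, neg_mul_neg, smul_mul_assoc, key, smul_smul, inv_mul_cancel₀ ht, one_smul]

/-- algebra core of the D₂(θ_{k+1}θ_k⁻¹) computation -/
lemma aux_W {m : ℕ} (s : ℝ) (hs : s ≠ 0) (p2 p1 p0 r2 r1 V1 V0 : Matrix (Fin m) (Fin m) ℂ)
    (hp1 : IsUnit p1.det) (hr1 : IsUnit r1.det)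
    (w2 : p2 - r2 = s • (V1 * p1)) (w1 : p1 - r1 = s • (V0 * p0)) :
    s⁻¹ • (p2 * p1⁻¹ - r2 * r1⁻¹) = V1 - r2 * r1⁻¹ * V0 * (p0 * p1⁻¹) := by
  have h1 : p2 * p1⁻¹ = r2 * p1⁻¹ + s • V1 := by
    have e1 : p2 = r2 + (p2 - r2) := by abel
    rw [e1, w2, Matrix.add_mul, smul_mul_assoc,
      Matrix.mul_nonsing_inv_cancel_right p1 V1 hp1]
  have h2 : r2 * p1⁻¹ - r2 * r1⁻¹ = -(s • (r2 * r1⁻¹ * V0 * (p0 * p1⁻¹))) := by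
    have e2 : r2 * r1⁻¹ * (r1 - p1) * p1⁻¹ = r2 * p1⁻¹ - r2 * r1⁻¹ := by
      rw [Matrix.mul_sub, Matrix.nonsing_inv_mul_cancel_right r1 r2 hr1, Matrix.sub_mul,
        Matrix.mul_nonsing_inv_cancel_right p1 (r2 * r1⁻¹) hp1]
    rw [← e2, show r1 - p1 = -(p1 - r1) from by abel, w1]
    simp only [mul_neg, neg_mul, mul_smul_comm, smul_mul_assoc, Matrix.mul_assoc]
  have key : p2 * p1⁻¹ - r2 * r1⁻¹ = s • (V1 - r2 * r1⁻¹ * V0 * (p0 * p1⁻¹)) := by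
    rw [h1,
      show r2 * p1⁻¹ + s • V1 - r2 * r1⁻¹ = s • V1 + (r2 * p1⁻¹ - r2 * r1⁻¹) from by abel,
      h2, smul_sub]
    abel
  rw [key, smul_smul, inv_mul_cancel₀ hs, one_smul]

/-- The Darboux transformation maps solutions of the noncommutative q-2DTL
equation to new solutions: the transformed potentials are again of the form
`σ₂(X̃_{n+1})X̃_n⁻¹`, `D₁(X̃_n)X̃_n⁻¹`, and `X̃` again solves the nc q-2DTL
equation. -/
theorem stmt_6 (q α β : ℝ) (hq : 0 < q) (hq1 : q ≠ 1) (m : ℕ) (hm : 1 ≤ m)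
    (X : ℤ → ℝ → ℝ → Matrix (Fin m) (Fin m) ℂ)
    (hXinv : ∀ (n : ℤ) (x y : ℝ), IsUnit (X n x y))
    (hX2DTL : ∀ (n : ℤ) (x y : ℝ), x ≠ 0 → y ≠ 0 →
      mD2 q β (fun u v => mD1 q α (X n) u v * (X n u v)⁻¹) x y
        = X (n + 1) x (q ^ β * y) * (X n x y)⁻¹
          - X n (q ^ α * x) (q ^ β * y) * (X (n - 1) (q ^ α * x) y)⁻¹)
    (V J : ℤ → ℝ → ℝ → Matrix (Fin m) (Fin m) ℂ)
    (hV : ∀ (n : ℤ) (x y : ℝ), V n x y = X (n + 1) x (q ^ β * y) * (X n x y)⁻¹)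
    (hJ : ∀ (n : ℤ) (x y : ℝ), J n x y = mD1 q α (X n) x y * (X n x y)⁻¹)
    (θ : ℤ → ℝ → ℝ → Matrix (Fin m) (Fin m) ℂ)
    (hθ2 : ∀ (n : ℤ) (x y : ℝ), x ≠ 0 → y ≠ 0 →
      mD2 q β (θ (n + 1)) x y = V n x y * θ n x y)
    (hθ1 : ∀ (n : ℤ) (x y : ℝ), x ≠ 0 → y ≠ 0 →
      mD1 q α (θ n) x y = -θ (n + 1) x y + J n x y * θ n x y)
    (hθinv : ∀ (n : ℤ) (x y : ℝ), IsUnit (θ n x y))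
    (Xt Vt Jt : ℤ → ℝ → ℝ → Matrix (Fin m) (Fin m) ℂ)
    (hXt : ∀ (n : ℤ) (x y : ℝ),
      Xt n x y = -(θ (n + 1) x y * (θ n x y)⁻¹ * X n x y))
    (hVt : ∀ (n : ℤ) (x y : ℝ),
      Vt n x y = (θ (n + 2) x (q ^ β * y) * (θ (n + 1) x (q ^ β * y))⁻¹)
        * V n x y * (θ n x y * (θ (n + 1) x y)⁻¹))
    (hJt : ∀ (n : ℤ) (x y : ℝ),
      Jt n x y = J (n + 1) x y + θ (n + 1) (q ^ α * x) y * (θ n (q ^ α * x) y)⁻¹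
        - θ (n + 2) x y * (θ (n + 1) x y)⁻¹) :
    (∀ (n : ℤ) (x y : ℝ), x ≠ 0 → y ≠ 0 →
        Vt n x y = Xt (n + 1) x (q ^ β * y) * (Xt n x y)⁻¹
          ∧ Jt n x y = mD1 q α (Xt n) x y * (Xt n x y)⁻¹)
      ∧ (∀ (n : ℤ) (x y : ℝ), x ≠ 0 → y ≠ 0 →
        mD2 q β (fun u v => mD1 q α (Xt n) u v * (Xt n u v)⁻¹) x y
          = Xt (n + 1) x (q ^ β * y) * (Xt n x y)⁻¹
            - Xt n (q ^ α * x) (q ^ β * y) * (Xt (n - 1) (q ^ α * x) y)⁻¹) := by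
  -- determinant units
  have hdX : ∀ (n : ℤ) (x y : ℝ), IsUnit ((X n x y).det) :=
    fun n x y => (Matrix.isUnit_iff_isUnit_det _).mp (hXinv n x y)
  have hdθ : ∀ (n : ℤ) (x y : ℝ), IsUnit ((θ n x y).det) :=
    fun n x y => (Matrix.isUnit_iff_isUnit_det _).mp (hθinv n x y)
  have h1q : (1 : ℝ) - q ≠ 0 := sub_ne_zero_of_ne (Ne.symm hq1)
  have hqa : q ^ α ≠ 0 := (Real.rpow_pos_of_pos hq α).ne'
  have hqb : q ^ β ≠ 0 := (Real.rpow_pos_of_pos hq β).ne'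
  -- difference form of the first Lax equation
  have hr : ∀ (n : ℤ) (x y : ℝ), x ≠ 0 → y ≠ 0 →
      θ n x y - θ n (q ^ α * x) y
        = ((1 - q) * x) • (-θ (n + 1) x y + J n x y * θ n x y) := by
    intro n x y hx hy
    exact smul_eq_of_inv_smul_eq (mul_ne_zero h1q hx) (hθ1 n x y hx hy)
  -- difference form of the second Lax equation
  have hw : ∀ (n : ℤ) (x y : ℝ), x ≠ 0 → y ≠ 0 →
      θ (n + 1) x y - θ (n + 1) x (q ^ β * y)
        = ((1 - q) * y) • (V n x y * θ n x y) := by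
    intro n x y hx hy
    exact smul_eq_of_inv_smul_eq (mul_ne_zero h1q hy) (hθ2 n x y hx hy)
  -- difference form of hJ
  have hXr : ∀ (n : ℤ) (x y : ℝ), x ≠ 0 →
      X n x y - X n (q ^ α * x) y = ((1 - q) * x) • (J n x y * X n x y) := by
    intro n x y hx
    apply smul_eq_of_inv_smul_eq (mul_ne_zero h1q hx)
    have h := hJ n x y
    have h2 : J n x y * X n x y = mD1 q α (X n) x y := by
      rw [h, Matrix.nonsing_inv_mul_cancel_right (X n x y) _ (hdX n x y)]
    rw [h2]; rfl
  -- q-difference of J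
  have hDJ : ∀ (n : ℤ) (x y : ℝ), x ≠ 0 → y ≠ 0 →
      ((1 - q) * y)⁻¹ • (J (n + 1) x y - J (n + 1) x (q ^ β * y))
        = V (n + 1) x y - V n (q ^ α * x) y := by
    intro n x y hx hy
    have h := hX2DTL (n + 1) x y hx hy
    simp only [mD2] at h
    rw [← hJ (n + 1) x y, ← hJ (n + 1) x (q ^ β * y)] at h
    rw [show n + 1 - 1 = n from by ring] at h
    rw [← hV (n + 1) x y, ← hV n (q ^ α * x) y] at h
    exact h
  -- part 1
  have part1 : ∀ (n : ℤ) (x y : ℝ), x ≠ 0 → y ≠ 0 →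
      Vt n x y = Xt (n + 1) x (q ^ β * y) * (Xt n x y)⁻¹
        ∧ Jt n x y = mD1 q α (Xt n) x y * (Xt n x y)⁻¹ := by
    intro n x y hx hy
    constructor
    · rw [hVt n x y, hV n x y, hXt (n + 1) x (q ^ β * y), hXt n x y,
        show n + 1 + 1 = n + 2 from by ring]
      exact (aux_V _ _ _ _ _ _ (hdX n x y) (hdθ n x y) (hdθ (n + 1) x y)).symm
    · rw [hJt n x y]
      show _ = mD1 q α (Xt n) x y * (Xt n x y)⁻¹
      simp only [mD1]
      rw [hXt n x y, hXt n (q ^ α * x) y]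
      have r2' := hr (n + 1) x y hx hy
      rw [show n + 1 + 1 = n + 2 from by ring] at r2'
      exact aux_J ((1 - q) * x) (mul_ne_zero h1q hx) _ _ _ _ _ _ _ _ _
        (hdθ n x y) (hdθ (n + 1) x y) (hdθ n (q ^ α * x) y) (hdX n x y)
        (hr n x y hx hy) r2' (hXr n x y hx)
  refine ⟨part1, ?_⟩
  intro n x y hx hy
  have hy' : q ^ β * y ≠ 0 := mul_ne_zero hqb hy
  have hx' : q ^ α * x ≠ 0 := mul_ne_zero hqa hx
  simp only [mD2]
  rw [← (part1 n x y hx hy).2, ← (part1 n x (q ^ β * y) hx hy').2]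
  rw [← (part1 n x y hx hy).1]
  have p := (part1 (n - 1) (q ^ α * x) y hx' hy).1
  rw [show n - 1 + 1 = n from by ring] at p
  rw [← p]
  -- now reduce to the computation D₂(J̃) = Ṽ_n - σ₁(Ṽ_{n-1})
  rw [hJt n x y, hJt n x (q ^ β * y)]
  rw [show J (n + 1) x y + θ (n + 1) (q ^ α * x) y * (θ n (q ^ α * x) y)⁻¹
        - θ (n + 2) x y * (θ (n + 1) x y)⁻¹
      - (J (n + 1) x (q ^ β * y)
          + θ (n + 1) (q ^ α * x) (q ^ β * y) * (θ n (q ^ α * x) (q ^ β * y))⁻¹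
          - θ (n + 2) x (q ^ β * y) * (θ (n + 1) x (q ^ β * y))⁻¹)
      = (J (n + 1) x y - J (n + 1) x (q ^ β * y))
        + (θ (n + 1) (q ^ α * x) y * (θ n (q ^ α * x) y)⁻¹
            - θ (n + 1) (q ^ α * x) (q ^ β * y) * (θ n (q ^ α * x) (q ^ β * y))⁻¹)
        - (θ (n + 2) x y * (θ (n + 1) x y)⁻¹
            - θ (n + 2) x (q ^ β * y) * (θ (n + 1) x (q ^ β * y))⁻¹) from by abel]
  rw [smul_sub, smul_add]
  rw [hDJ n x y hx hy]
  -- middle term via aux_W at the x-shifted point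
  have w1' := hw (n - 1) (q ^ α * x) y hx' hy
  rw [show n - 1 + 1 = n from by ring] at w1'
  have h2 := aux_W ((1 - q) * y) (mul_ne_zero h1q hy)
    (θ (n + 1) (q ^ α * x) y) (θ n (q ^ α * x) y) (θ (n - 1) (q ^ α * x) y)
    (θ (n + 1) (q ^ α * x) (q ^ β * y)) (θ n (q ^ α * x) (q ^ β * y))
    (V n (q ^ α * x) y) (V (n - 1) (q ^ α * x) y)
    (hdθ n (q ^ α * x) y) (hdθ n (q ^ α * x) (q ^ β * y))
    (hw n (q ^ α * x) y hx' hy) w1'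
  rw [h2]
  -- last term via aux_W at the base point
  have w2' := hw (n + 1) x y hx hy
  rw [show n + 1 + 1 = n + 2 from by ring] at w2'
  have h3 := aux_W ((1 - q) * y) (mul_ne_zero h1q hy)
    (θ (n + 2) x y) (θ (n + 1) x y) (θ n x y)
    (θ (n + 2) x (q ^ β * y)) (θ (n + 1) x (q ^ β * y))
    (V (n + 1) x y) (V n x y)
    (hdθ (n + 1) x y) (hdθ (n + 1) x (q ^ β * y))
    w2' (hw n x y hx hy)
  rw [h3]
  -- rewrite the transformed potentials
  have hv1 := hVt n x y
  have hv2 := hVt (n - 1) (q ^ α * x) y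
  rw [show n - 1 + 2 = n + 1 from by ring, show n - 1 + 1 = n from by ring] at hv2
  rw [hv1, hv2]
  abel
end

section
/- Assume every θ^{(k)}_n[k] (1 ≤ k ≤ N, n ∈ ℤ) is invertible and that for every n ∈ ℤ the N×N matrix C(n) over R with entries C(n)_{j,i} = θ_{n+N−j, i} (1 ≤ j, i ≤ N) is invertible. Then for every n ∈ ℤ the N-fold Darboux iterate has the quasideterminant closed form φ_n[N+1] = (−1)^N ( φ_{n+N} − Σ_{i=1}^{N} Σ_{j=1}^{N} θ_{n+N, i} · (C(n)⁻¹)_{i,j} · φ_{n+N−j} ). -/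
/-- Quasideterminant (quasicasoratian) closed form of the `N`-fold iterated
Darboux transform `φ_n[N+1]` for the noncommutative q-2DTL equation.
Here `th i n k` stands for `θ^{(i)}_n[k+1]` and `ph n k` for `φ_n[k+1]`
(the iteration index is shifted so that it starts at `0` instead of `1`),
and `C n` is the Casorati-type coefficient matrix with entries
`C(n)_{j,i} = θ_{n+N-1-j,i}` (indices starting from `0`). -/
theorem stmt_7 {R : Type*} [Ring R] (N : ℕ)
    (θ : ℤ → Fin N → R) (φ : ℤ → R)
    (th : Fin N → ℤ → ℕ → R) (ph : ℤ → ℕ → R)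
    (hth0 : ∀ (i : Fin N) (n : ℤ), th i n 0 = θ n i)
    (hph0 : ∀ n : ℤ, ph n 0 = φ n)
    (hthS : ∀ (i : Fin N) (n : ℤ) (k : ℕ) (hk : k < N),
      th i n (k + 1) = -th i (n + 1) k
        + th ⟨k, hk⟩ (n + 1) k * Ring.inverse (th ⟨k, hk⟩ n k) * th i n k)
    (hphS : ∀ (n : ℤ) (k : ℕ) (hk : k < N),
      ph n (k + 1) = -ph (n + 1) k
        + th ⟨k, hk⟩ (n + 1) k * Ring.inverse (th ⟨k, hk⟩ n k) * ph n k)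
    (hunit : ∀ (k : ℕ) (hk : k < N) (n : ℤ), IsUnit (th ⟨k, hk⟩ n k))
    (C : ℤ → Matrix (Fin N) (Fin N) R)
    (hC : ∀ (n : ℤ) (j i : Fin N), C n j i = θ (n + (N : ℤ) - 1 - ((j : ℕ) : ℤ)) i)
    (Cinv : ℤ → Matrix (Fin N) (Fin N) R)
    (hCl : ∀ n : ℤ, C n * Cinv n = 1) (hCr : ∀ n : ℤ, Cinv n * C n = 1) :
    ∀ n : ℤ, ph n N = (-1 : R) ^ N *
      (φ (n + (N : ℤ)) - ∑ i : Fin N, ∑ j : Fin N,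
        θ (n + (N : ℤ)) i * Cinv n i j * φ (n + (N : ℤ) - 1 - ((j : ℕ) : ℤ))) := by
  classical
  -- Step 1: the transform annihilates earlier eigenfunctions
  have hzero : ∀ k : ℕ, k ≤ N → ∀ i : Fin N, (i : ℕ) < k → ∀ n : ℤ, th i n k = 0 := by
    intro k
    induction k with
    | zero => intro _ i hi n; exact absurd hi (Nat.not_lt_zero _)
    | succ k ih =>
      intro hkN i hi n
      have hk : k < N := hkN
      rcases Nat.lt_succ_iff_lt_or_eq.mp hi with h | h
      · rw [hthS i n k hk, ih (Nat.le_of_succ_le hkN) i h, ih (Nat.le_of_succ_le hkN) i h]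
        simp
      · have hieq : i = ⟨k, hk⟩ := Fin.ext h
        subst hieq
        rw [hthS _ n k hk, mul_assoc, Ring.inverse_mul_cancel _ (hunit k hk n), mul_one,
          neg_add_cancel]
  -- Step 2: linear expansion with common coefficients
  have hcoef : ∀ k : ℕ, k ≤ N → ∃ a : ℤ → ℕ → R,
      (∀ n : ℤ, a n k = (-1 : R) ^ k) ∧
      (∀ (n : ℤ) (i : Fin N),
        th i n k = ∑ m ∈ Finset.range (k + 1), a n m * θ (n + (m : ℤ)) i) ∧
      (∀ n : ℤ, ph n k = ∑ m ∈ Finset.range (k + 1), a n m * φ (n + (m : ℤ))) := by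
    intro k
    induction k with
    | zero =>
      intro _
      exact ⟨fun _ _ => 1, fun n => by simp, fun n i => by simp [hth0], fun n => by simp [hph0]⟩
    | succ k ih =>
      intro hkN
      obtain ⟨a, hlead, hthk, hphk⟩ := ih (Nat.le_of_succ_le hkN)
      have hk : k < N := hkN
      set c : ℤ → R := fun n => th ⟨k, hk⟩ (n + 1) k * Ring.inverse (th ⟨k, hk⟩ n k) with hc
      refine ⟨fun n m => (if m ≤ k then c n * a n m else 0) -
          (if m = 0 then 0 else a (n + 1) (m - 1)), ?_, ?_, ?_⟩
      · intro n
        simp [hlead, pow_succ]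
      · intro n i
        rw [hthS i n k hk]
        have h1 : ∑ m ∈ Finset.range (k + 2),
            ((if m ≤ k then c n * a n m else 0) -
              (if m = 0 then 0 else a (n + 1) (m - 1))) * θ (n + (m : ℤ)) i
            = ∑ m ∈ Finset.range (k + 2), (if m ≤ k then c n * a n m else 0) * θ (n + (m : ℤ)) i
              - ∑ m ∈ Finset.range (k + 2),
                (if m = 0 then 0 else a (n + 1) (m - 1)) * θ (n + (m : ℤ)) i := by
          rw [← Finset.sum_sub_distrib]
          exact Finset.sum_congr rfl fun m _ => by rw [sub_mul]
        rw [h1]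
        have h2 : ∑ m ∈ Finset.range (k + 2),
            (if m ≤ k then c n * a n m else 0) * θ (n + (m : ℤ)) i = c n * th i n k := by
          rw [Finset.sum_range_succ, if_neg (by omega), zero_mul, add_zero, hthk n i,
            Finset.mul_sum]
          refine Finset.sum_congr rfl fun m hm => ?_
          rw [if_pos (by exact Nat.lt_succ_iff.mp (Finset.mem_range.mp hm)), mul_assoc]
        have h3 : ∑ m ∈ Finset.range (k + 2),
            (if m = 0 then 0 else a (n + 1) (m - 1)) * θ (n + (m : ℤ)) i
            = th i (n + 1) k := by
          rw [Finset.sum_range_succ' _ (k + 1), if_pos rfl, zero_mul, add_zero, hthk (n + 1) i]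
          refine Finset.sum_congr rfl fun m hm => ?_
          rw [if_neg (Nat.succ_ne_zero m)]
          congr 2
          omega
        rw [h2, h3, neg_add_eq_sub]
      · intro n
        rw [hphS n k hk]
        have h1 : ∑ m ∈ Finset.range (k + 2),
            ((if m ≤ k then c n * a n m else 0) -
              (if m = 0 then 0 else a (n + 1) (m - 1))) * φ (n + (m : ℤ))
            = ∑ m ∈ Finset.range (k + 2), (if m ≤ k then c n * a n m else 0) * φ (n + (m : ℤ))
              - ∑ m ∈ Finset.range (k + 2),
                (if m = 0 then 0 else a (n + 1) (m - 1)) * φ (n + (m : ℤ)) := by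
          rw [← Finset.sum_sub_distrib]
          exact Finset.sum_congr rfl fun m _ => by rw [sub_mul]
        rw [h1]
        have h2 : ∑ m ∈ Finset.range (k + 2),
            (if m ≤ k then c n * a n m else 0) * φ (n + (m : ℤ)) = c n * ph n k := by
          rw [Finset.sum_range_succ, if_neg (by omega), zero_mul, add_zero, hphk n,
            Finset.mul_sum]
          refine Finset.sum_congr rfl fun m hm => ?_
          rw [if_pos (by exact Nat.lt_succ_iff.mp (Finset.mem_range.mp hm)), mul_assoc]
        have h3 : ∑ m ∈ Finset.range (k + 2),
            (if m = 0 then 0 else a (n + 1) (m - 1)) * φ (n + (m : ℤ))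
            = ph (n + 1) k := by
          rw [Finset.sum_range_succ' _ (k + 1), if_pos rfl, zero_mul, add_zero, hphk (n + 1)]
          refine Finset.sum_congr rfl fun m hm => ?_
          rw [if_neg (Nat.succ_ne_zero m)]
          congr 2
          omega
        rw [h2, h3, neg_add_eq_sub]
  -- Step 3: conclusion
  intro n
  obtain ⟨a, hlead, hthN, hphN⟩ := hcoef N le_rfl
  have hz' : ∀ i : Fin N, ∑ m ∈ Finset.range N, a n m * θ (n + (m : ℤ)) i
      = -((-1 : R) ^ N * θ (n + (N : ℤ)) i) := by
    intro i
    have h0 : ∑ m ∈ Finset.range (N + 1), a n m * θ (n + (m : ℤ)) i = 0 := by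
      rw [← hthN n i, hzero N le_rfl i i.isLt n]
    rw [Finset.sum_range_succ, hlead] at h0
    exact eq_neg_of_add_eq_zero_left h0
  -- reflection: range sum to Fin sum over the Casorati matrix
  have hrefl : ∀ g : ℤ → R, ∑ j : Fin N, a n (N - 1 - (j : ℕ)) * g (n + (N : ℤ) - 1 - ((j : ℕ) : ℤ))
      = ∑ m ∈ Finset.range N, a n m * g (n + (m : ℤ)) := by
    intro g
    rw [← Finset.sum_range fun m => a n (N - 1 - m) * g (n + (N : ℤ) - 1 - (m : ℤ)),
      ← Finset.sum_range_reflect (fun m => a n m * g (n + (m : ℤ))) N]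
    refine Finset.sum_congr rfl fun m hm => ?_
    have hmN : m < N := Finset.mem_range.mp hm
    congr 2
    omega
  have hrow : ∀ i : Fin N, ∑ j : Fin N, a n (N - 1 - (j : ℕ)) * C n j i
      = -((-1 : R) ^ N * θ (n + (N : ℤ)) i) := by
    intro i
    rw [← hz' i, ← hrefl fun m => θ m i]
    exact Finset.sum_congr rfl fun j _ => by rw [hC]
  have hv : ∀ j : Fin N, a n (N - 1 - (j : ℕ))
      = ∑ i : Fin N, -((-1 : R) ^ N * θ (n + (N : ℤ)) i) * Cinv n i j := by
    intro j
    have step1 : a n (N - 1 - (j : ℕ))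
        = ∑ j' : Fin N, a n (N - 1 - (j' : ℕ)) * (C n * Cinv n) j' j := by
      rw [hCl n]
      simp [Matrix.one_apply]
    rw [step1]
    have step2 : ∀ j' : Fin N, a n (N - 1 - (j' : ℕ)) * (C n * Cinv n) j' j
        = ∑ i : Fin N, a n (N - 1 - (j' : ℕ)) * C n j' i * Cinv n i j := by
      intro j'
      rw [Matrix.mul_apply, Finset.mul_sum]
      exact Finset.sum_congr rfl fun i _ => by rw [mul_assoc]
    rw [Finset.sum_congr rfl fun j' _ => step2 j', Finset.sum_comm]
    refine Finset.sum_congr rfl fun i _ => ?_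
    rw [← Finset.sum_mul, hrow i]
  -- assemble
  have hph' : ph n N = ∑ m ∈ Finset.range N, a n m * φ (n + (m : ℤ))
      + (-1 : R) ^ N * φ (n + (N : ℤ)) := by
    rw [hphN n, Finset.sum_range_succ, hlead]
  rw [hph', ← hrefl φ]
  have hterm : ∀ j : Fin N,
      a n (N - 1 - (j : ℕ)) * φ (n + (N : ℤ) - 1 - ((j : ℕ) : ℤ))
      = ∑ i : Fin N, -((-1 : R) ^ N *
          (θ (n + (N : ℤ)) i * Cinv n i j * φ (n + (N : ℤ) - 1 - ((j : ℕ) : ℤ)))) := by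
    intro j
    rw [hv j, Finset.sum_mul]
    refine Finset.sum_congr rfl fun i _ => ?_
    rw [neg_mul, neg_mul, mul_assoc, mul_assoc, mul_assoc]
  rw [Finset.sum_congr rfl fun j _ => hterm j, Finset.sum_comm]
  rw [mul_sub]
  have : ∑ i : Fin N, ∑ j : Fin N, -((-1 : R) ^ N *
      (θ (n + (N : ℤ)) i * Cinv n i j * φ (n + (N : ℤ) - 1 - ((j : ℕ) : ℤ))))
      = -((-1 : R) ^ N * ∑ i : Fin N, ∑ j : Fin N,
          θ (n + (N : ℤ)) i * Cinv n i j * φ (n + (N : ℤ) - 1 - ((j : ℕ) : ℤ))) := by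
    rw [Finset.mul_sum, ← Finset.sum_neg_distrib]
    refine Finset.sum_congr rfl fun i _ => ?_
    rw [Finset.mul_sum, ← Finset.sum_neg_distrib]
  rw [this]
  abel
end

section
/- Assume every θ^{(k)}_n[k] (1 ≤ k ≤ N, n ∈ ℤ) is invertible and that for every n ∈ ℤ the N×N matrix C(n) over R with entries C(n)_{j,i} = θ_{n+N−j, i} (1 ≤ j, i ≤ N) is invertible. Let (X_n) be a sequence in R and define X_n[1] = X_n and X_n[k+1] = −θ^{(k)}_{n+1}[k]·(θ^{(k)}_n[k])⁻¹·X_n[k]. Then for every n ∈ ℤ: X_n[N+1] = ( −Σ_{i=1}^{N} θ_{n+N, i}·(C(n)⁻¹)_{i,N} ) · X_n, i.e. X_n[N+1] equals the quasideterminant of the (N+1)×(N+1) array with rows (θ_{n+N,1},…,θ_{n+N,N},0), …, (θ_{n+1,1},…,θ_{n+1,N},0), (θ_{n,1},…,θ_{n,N},1) expanded about the boxed 0 in the top right, multiplied on the right by X_n. -/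
/-- Coefficients of the expansion of the iterated Darboux transform. -/
def coefAux {R : Type*} [Ring R] (B : ℤ → ℕ → R) : ℕ → ℤ → ℕ → R
  | 0, _, 0 => 1
  | 0, _, _+1 => 0
  | k+1, n, 0 => B n k * coefAux B k n 0
  | k+1, n, m+1 => -coefAux B k (n+1) m + B n k * coefAux B k n (m+1)

lemma coefAux_zero_of_lt {R : Type*} [Ring R] (B : ℤ → ℕ → R) :
    ∀ (k m : ℕ), k < m → ∀ n : ℤ, coefAux B k n m = 0 := by
  intro k
  induction k with
  | zero =>
    intro m hm n
    match m, hm with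
    | m+1, _ => simp [coefAux]
  | succ k ih =>
    intro m hm n
    match m, hm with
    | m+1, hm =>
      have h1 : k < m := by omega
      have h2 : k < m + 1 := by omega
      simp [coefAux, ih m h1, ih (m+1) h2]

lemma coefAux_diag {R : Type*} [Ring R] (B : ℤ → ℕ → R) :
    ∀ (k : ℕ) (n : ℤ), coefAux B k n k = (-1 : R) ^ k := by
  intro k
  induction k with
  | zero => intro n; simp [coefAux]
  | succ k ih =>
    intro n
    simp [coefAux, ih, coefAux_zero_of_lt B k (k+1) (by omega), pow_succ]

open Matrix in
/-- Quasideterminant closed form of the `N`-fold iterated Darboux transform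
`X_n[N+1]` for the noncommutative q-2DTL equation.  Here `th i n k` stands for
`θ^{(i)}_n[k+1]` and `Xit n k` for `X_n[k+1]` (the iteration index is shifted
so that it starts at `0` instead of `1`), and `C n` is the Casorati-type
coefficient matrix with entries `C(n)_{j,i} = θ_{n+N-1-j,i}` (indices starting
from `0`); the last column of `C(n)⁻¹` has (0-based) index `N-1`. -/
theorem stmt_8 {R : Type*} [Ring R] (N : ℕ) (hN : 0 < N)
    (θ : ℤ → Fin N → R)
    (th : Fin N → ℤ → ℕ → R)
    (hth0 : ∀ (i : Fin N) (n : ℤ), th i n 0 = θ n i)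
    (hthS : ∀ (i : Fin N) (n : ℤ) (k : ℕ) (hk : k < N),
      th i n (k + 1) = -th i (n + 1) k
        + th ⟨k, hk⟩ (n + 1) k * Ring.inverse (th ⟨k, hk⟩ n k) * th i n k)
    (hunit : ∀ (k : ℕ) (hk : k < N) (n : ℤ), IsUnit (th ⟨k, hk⟩ n k))
    (C : ℤ → Matrix (Fin N) (Fin N) R)
    (hC : ∀ (n : ℤ) (j i : Fin N), C n j i = θ (n + (N : ℤ) - 1 - ((j : ℕ) : ℤ)) i)
    (Cinv : ℤ → Matrix (Fin N) (Fin N) R)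
    (hCl : ∀ n : ℤ, C n * Cinv n = 1) (hCr : ∀ n : ℤ, Cinv n * C n = 1)
    (X : ℤ → R) (Xit : ℤ → ℕ → R)
    (hXit0 : ∀ n : ℤ, Xit n 0 = X n)
    (hXitS : ∀ (n : ℤ) (k : ℕ) (hk : k < N),
      Xit n (k + 1)
        = -(th ⟨k, hk⟩ (n + 1) k * Ring.inverse (th ⟨k, hk⟩ n k) * Xit n k)) :
    ∀ n : ℤ, Xit n N
      = (-(∑ i : Fin N, θ (n + (N : ℤ)) i * Cinv n i ⟨N - 1, by omega⟩)) * X n := by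
  classical
  set B : ℤ → ℕ → R := fun n k =>
    if h : k < N then th ⟨k, h⟩ (n + 1) k * Ring.inverse (th ⟨k, h⟩ n k) else 0 with hB
  have hBdef : ∀ (n : ℤ) (k : ℕ) (hk : k < N),
      B n k = th ⟨k, hk⟩ (n + 1) k * Ring.inverse (th ⟨k, hk⟩ n k) := by
    intro n k hk; simp [hB, hk]
  -- expansion lemma
  have hexp : ∀ k, k ≤ N → ∀ (n : ℤ) (i : Fin N),
      th i n k = ∑ m ∈ Finset.range (k+1), coefAux B k n m * θ (n + (m : ℤ)) i := by
    intro k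
    induction k with
    | zero => intro _ n i; simp [hth0, coefAux]
    | succ k ih =>
      intro hk n i
      have hkN : k < N := hk
      have ih1 := ih (le_of_lt hkN)
      rw [hthS i n k hkN, ← hBdef n k hkN, ih1 (n+1) i, ih1 n i]
      rw [Finset.sum_range_succ' (fun m => coefAux B (k+1) n m * θ (n + (m : ℤ)) i) (k+1)]
      have e1 : ∀ m ∈ Finset.range (k+1),
          coefAux B (k+1) n (m+1) * θ (n + ((m+1 : ℕ) : ℤ)) i
            = -(coefAux B k (n+1) m * θ ((n+1) + (m : ℤ)) i)
              + B n k * (coefAux B k n (m+1) * θ (n + ((m+1 : ℕ) : ℤ)) i) := by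
        intro m _
        show (-coefAux B k (n+1) m + B n k * coefAux B k n (m+1)) * _ = _
        rw [add_mul, neg_mul, mul_assoc]
        congr 3
        push_cast; ring
      rw [Finset.sum_congr rfl e1, Finset.sum_add_distrib, Finset.sum_neg_distrib,
        ← Finset.mul_sum]
      have e0 : coefAux B (k+1) n 0 * θ (n + ((0:ℕ) : ℤ)) i
          = B n k * (coefAux B k n 0 * θ (n + ((0:ℕ) : ℤ)) i) := by
        show (B n k * coefAux B k n 0) * _ = _
        rw [mul_assoc]
      rw [e0, add_assoc, ← mul_add]
      congr 1
      rw [← Finset.sum_range_succ' (fun m => coefAux B k n m * θ (n + (m : ℤ)) i) (k+1),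
        Finset.sum_range_succ (fun m => coefAux B k n m * θ (n + (m : ℤ)) i) (k+1),
        coefAux_zero_of_lt B k (k+1) (by omega) n]
      simp
  -- vanishing lemma
  have hvanish : ∀ k, k ≤ N → ∀ (i : Fin N), (i : ℕ) < k → ∀ n : ℤ, th i n k = 0 := by
    intro k
    induction k with
    | zero => intro _ i hi; omega
    | succ k ih =>
      intro hk i hi n
      have hkN : k < N := hk
      rw [hthS i n k hkN]
      rcases Nat.lt_or_ge (i : ℕ) k with h | h
      · rw [ih (le_of_lt hkN) i h (n+1), ih (le_of_lt hkN) i h n]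
        simp
      · have : i = ⟨k, hkN⟩ := Fin.ext (show (i : ℕ) = k by omega)
        subst this
        rw [mul_assoc, Ring.inverse_mul_cancel _ (hunit k hkN n), mul_one]
        simp
  -- Xit closed form
  have hX : ∀ k, k ≤ N → ∀ n : ℤ, Xit n k = (-1 : R)^k * (coefAux B k n 0 * X n) := by
    intro k
    induction k with
    | zero => intro _ n; simp [hXit0, coefAux]
    | succ k ih =>
      intro hk n
      have hkN : k < N := hk
      rw [hXitS n k hkN, ← hBdef n k hkN, ih (le_of_lt hkN) n]
      have hc : (-1:R)^k * B n k = B n k * (-1:R)^k :=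
        ((Commute.neg_one_left (B n k)).pow_left k).eq
      calc -(B n k * ((-1:R)^k * (coefAux B k n 0 * X n)))
          = -((-1:R)^k * (B n k * (coefAux B k n 0 * X n))) := by
            rw [← mul_assoc, ← hc, mul_assoc]
        _ = (-1:R)^(k+1) * (coefAux B (k+1) n 0 * X n) := by
            rw [show coefAux B (k+1) n 0 = B n k * coefAux B k n 0 from rfl]
            rw [pow_succ, mul_assoc ((-1:R)^k), neg_one_mul, mul_neg, mul_assoc]
  intro n
  -- the key linear relation
  have hrel : ∀ i : Fin N,
      ∑ m ∈ Finset.range N, coefAux B N n m * θ (n + (m : ℤ)) i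
        = -((-1 : R)^N * θ (n + (N : ℤ)) i) := by
    intro i
    have h0 : ∑ m ∈ Finset.range (N+1), coefAux B N n m * θ (n + (m : ℤ)) i = 0 := by
      rw [← hexp N le_rfl n i, hvanish N le_rfl i i.isLt n]
    rw [Finset.sum_range_succ, coefAux_diag B N n] at h0
    exact eq_neg_of_add_eq_zero_left h0
  set j0 : Fin N := ⟨N - 1, by omega⟩ with hj0
  set v : Fin N → R := fun j => coefAux B N n (N - 1 - (j : ℕ)) with hv
  have hvC : v ᵥ* C n = fun i => -((-1 : R)^N * θ (n + (N : ℤ)) i) := by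
    funext i
    show ∑ j : Fin N, v j * C n j i = _
    have e : ∀ j : Fin N, v j * C n j i
        = coefAux B N n (N - 1 - (j : ℕ)) * θ (n + ((N - 1 - (j : ℕ) : ℕ) : ℤ)) i := by
      intro j
      rw [hC n j i]
      congr 2
      have : ((N - 1 - (j : ℕ) : ℕ) : ℤ) = (N : ℤ) - 1 - ((j : ℕ) : ℤ) := by
        have := j.isLt; omega
      rw [this]; ring
    rw [Finset.sum_congr rfl (fun j _ => e j), ← hrel i]
    rw [Fin.sum_univ_eq_sum_range (fun m => coefAux B N n (N - 1 - m) * θ (n + ((N - 1 - m : ℕ) : ℤ)) i) N]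
    exact Finset.sum_range_reflect (fun m => coefAux B N n m * θ (n + (m : ℤ)) i) N
  have hvj0 : v j0 = ∑ i : Fin N, -((-1 : R)^N * θ (n + (N : ℤ)) i) * Cinv n i j0 := by
    have : v = (v ᵥ* C n) ᵥ* Cinv n := by
      rw [Matrix.vecMul_vecMul, hCl n, Matrix.vecMul_one]
    calc v j0 = ((v ᵥ* C n) ᵥ* Cinv n) j0 := by rw [← this]
      _ = ∑ i : Fin N, (v ᵥ* C n) i * Cinv n i j0 := rfl
      _ = ∑ i : Fin N, -((-1 : R)^N * θ (n + (N : ℤ)) i) * Cinv n i j0 := by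
          rw [hvC]
  have hc0 : coefAux B N n 0 = v j0 := by
    simp only [hv, hj0]
    congr 1
    omega
  rw [hX N le_rfl n, hc0, hvj0]
  have : (∑ i : Fin N, -((-1 : R)^N * θ (n + (N : ℤ)) i) * Cinv n i j0)
      = -((-1 : R)^N * ∑ i : Fin N, θ (n + (N : ℤ)) i * Cinv n i j0) := by
    rw [Finset.mul_sum, ← Finset.sum_neg_distrib]
    congr 1; funext i
    rw [neg_mul, mul_assoc]
  rw [this]
  have hsq : (-1 : R)^N * (-1 : R)^N = 1 := by
    rw [← pow_add, ← two_mul, pow_mul, neg_one_sq, one_pow]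
  calc (-1:R)^N * (-((-1:R)^N * ∑ i : Fin N, θ (n + (N:ℤ)) i * Cinv n i j0) * X n)
      = -((-1:R)^N * ((-1:R)^N * ((∑ i : Fin N, θ (n + (N:ℤ)) i * Cinv n i j0) * X n))) := by
        rw [neg_mul, mul_assoc, mul_neg]
    _ = -((∑ i : Fin N, θ (n + (N:ℤ)) i * Cinv n i j0) * X n) := by
        rw [← mul_assoc, hsq, one_mul]
    _ = (-(∑ i : Fin N, θ (n + (N:ℤ)) i * Cinv n i j0)) * X n := by rw [neg_mul]
end

section
/- (Noncommutative Jacobi / Sylvester identity.) Let A be an n×n matrix over R, let B, C be column n-vectors, D, E be row n-vectors, and f, g, h, i ∈ R. Assume A is invertible, the (n+1)×(n+1) block matrix N = [[A, B],[D, f]] is invertible, and f − D A⁻¹ B is invertible. Then i − (E, h) · N⁻¹ · (C, g)ᵀ = (i − E A⁻¹ C) − (h − E A⁻¹ B)·(f − D A⁻¹ B)⁻¹·(g − D A⁻¹ C). -/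
open Matrix in
/-- The noncommutative Jacobi / Sylvester identity for quasideterminants. -/
theorem stmt_9 {R : Type*} [Ring R] (n : ℕ)
    (A : Matrix (Fin n) (Fin n) R) (B C : Fin n → R) (D E : Fin n → R)
    (f g h i : R)
    (Ainv : Matrix (Fin n) (Fin n) R) (hAl : A * Ainv = 1) (hAr : Ainv * A = 1)
    (Ninv : Matrix (Fin n ⊕ Unit) (Fin n ⊕ Unit) R)
    (hNl : Matrix.fromBlocks A (Matrix.of fun p (_ : Unit) => B p)
        (Matrix.of fun (_ : Unit) p => D p) (Matrix.of fun (_ : Unit) (_ : Unit) => f)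
      * Ninv = 1)
    (hNr : Ninv * Matrix.fromBlocks A (Matrix.of fun p (_ : Unit) => B p)
        (Matrix.of fun (_ : Unit) p => D p) (Matrix.of fun (_ : Unit) (_ : Unit) => f)
      = 1)
    (finv : R)
    (hfl : (f - D ⬝ᵥ Ainv *ᵥ B) * finv = 1)
    (hfr : finv * (f - D ⬝ᵥ Ainv *ᵥ B) = 1) :
    i - (Sum.elim E fun _ => h) ⬝ᵥ Ninv *ᵥ (Sum.elim C fun _ => g)
      = (i - E ⬝ᵥ Ainv *ᵥ C)
        - (h - E ⬝ᵥ Ainv *ᵥ B) * finv * (g - D ⬝ᵥ Ainv *ᵥ C) := by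
  set N := Matrix.fromBlocks A (Matrix.of fun p (_ : Unit) => B p)
      (Matrix.of fun (_ : Unit) p => D p) (Matrix.of fun (_ : Unit) (_ : Unit) => f) with hN
  set x : (Fin n ⊕ Unit) → R := Ninv *ᵥ (Sum.elim C fun _ => g) with hxdef
  set x₁ : Fin n → R := fun q => x (Sum.inl q) with hx1def
  set x₂ : R := x (Sum.inr ()) with hx2def
  have hx : N *ᵥ x = Sum.elim C fun _ => g := by
    rw [hxdef, Matrix.mulVec_mulVec, hNl, Matrix.one_mulVec]
  -- component equations
  have h1 : ∀ p, (A *ᵥ x₁) p + B p * x₂ = C p := by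
    intro p
    have := congrFun hx (Sum.inl p)
    simpa [hN, Matrix.mulVec, dotProduct, Matrix.fromBlocks,
      Fintype.sum_sum_type] using this
  have h2 : D ⬝ᵥ x₁ + f * x₂ = g := by
    have := congrFun hx (Sum.inr ())
    simpa [hN, Matrix.mulVec, dotProduct, Matrix.fromBlocks,
      Fintype.sum_sum_type] using this
  -- solve for x₁
  have hx1 : x₁ = fun p => (Ainv *ᵥ C) p - (Ainv *ᵥ B) p * x₂ := by
    have hA : A *ᵥ x₁ = fun p => C p - B p * x₂ :=
      funext fun p => eq_sub_of_add_eq (h1 p)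
    have : x₁ = Ainv *ᵥ (A *ᵥ x₁) := by
      rw [Matrix.mulVec_mulVec, hAr, Matrix.one_mulVec]
    rw [this, hA]
    funext p
    simp [Matrix.mulVec, dotProduct, mul_sub, Finset.sum_sub_distrib,
      Finset.sum_mul, mul_assoc]
  have hdot : ∀ (v : Fin n → R), v ⬝ᵥ x₁ = v ⬝ᵥ (Ainv *ᵥ C) - (v ⬝ᵥ (Ainv *ᵥ B)) * x₂ := by
    intro v
    rw [hx1]
    simp [dotProduct, mul_sub, Finset.sum_sub_distrib, Finset.sum_mul, mul_assoc]
  -- solve for x₂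
  have h2' : (f - D ⬝ᵥ Ainv *ᵥ B) * x₂ = g - D ⬝ᵥ Ainv *ᵥ C := by
    have := h2
    rw [hdot D] at this
    rw [sub_mul]
    rw [eq_sub_iff_add_eq]
    linear_combination (norm := noncomm_ring) this
  have hx2 : x₂ = finv * (g - D ⬝ᵥ Ainv *ᵥ C) := by
    calc x₂ = (finv * (f - D ⬝ᵥ Ainv *ᵥ B)) * x₂ := by rw [hfr, one_mul]
    _ = finv * ((f - D ⬝ᵥ Ainv *ᵥ B) * x₂) := by rw [mul_assoc]
    _ = finv * (g - D ⬝ᵥ Ainv *ᵥ C) := by rw [h2']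
  -- expand the goal
  have hlhs : (Sum.elim E fun _ => h) ⬝ᵥ x = E ⬝ᵥ x₁ + h * x₂ := by
    simp [dotProduct, Fintype.sum_sum_type, hx1def, hx2def]
  rw [show (Sum.elim E fun _ => h) ⬝ᵥ Ninv *ᵥ (Sum.elim C fun _ => g)
      = (Sum.elim E fun _ => h) ⬝ᵥ x from rfl, hlhs, hdot E, mul_assoc, ← hx2]
  noncomm_ring
end

section
/- (Homological relation for quasideterminants.) Let A be an n×n matrix over R, let B, C be column n-vectors, D, E be row n-vectors, and f, g, h, i ∈ R. Assume the (n+1)×(n+1) block matrices N = [[A, B],[D, f]] and P = [[A, B],[E, h]] are both invertible. Then g − (D, f) · P⁻¹ · (C, i)ᵀ = ( −(D, f) · P⁻¹ · (0, 1)ᵀ ) · ( i − (E, h) · N⁻¹ · (C, g)ᵀ ), where (0,1)ᵀ denotes the column n+1-vector with 1 in the last position and 0 elsewhere. -/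
open Matrix in
/-- The homological relation for quasideterminants. -/
theorem stmt_10 {R : Type*} [Ring R] (n : ℕ)
    (A : Matrix (Fin n) (Fin n) R) (B C : Fin n → R) (D E : Fin n → R)
    (f g h i : R)
    (Ninv : Matrix (Fin n ⊕ Unit) (Fin n ⊕ Unit) R)
    (hNl : Matrix.fromBlocks A (Matrix.of fun p (_ : Unit) => B p)
        (Matrix.of fun (_ : Unit) p => D p) (Matrix.of fun (_ : Unit) (_ : Unit) => f)
      * Ninv = 1)
    (hNr : Ninv * Matrix.fromBlocks A (Matrix.of fun p (_ : Unit) => B p)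
        (Matrix.of fun (_ : Unit) p => D p) (Matrix.of fun (_ : Unit) (_ : Unit) => f)
      = 1)
    (Pinv : Matrix (Fin n ⊕ Unit) (Fin n ⊕ Unit) R)
    (hPl : Matrix.fromBlocks A (Matrix.of fun p (_ : Unit) => B p)
        (Matrix.of fun (_ : Unit) p => E p) (Matrix.of fun (_ : Unit) (_ : Unit) => h)
      * Pinv = 1)
    (hPr : Pinv * Matrix.fromBlocks A (Matrix.of fun p (_ : Unit) => B p)
        (Matrix.of fun (_ : Unit) p => E p) (Matrix.of fun (_ : Unit) (_ : Unit) => h)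
      = 1) :
    g - (Sum.elim D fun _ => f) ⬝ᵥ Pinv *ᵥ (Sum.elim C fun _ => i)
      = (-((Sum.elim D fun _ => f) ⬝ᵥ Pinv *ᵥ (Sum.elim (fun _ => 0) fun _ => (1 : R))))
        * (i - (Sum.elim E fun _ => h) ⬝ᵥ Ninv *ᵥ (Sum.elim C fun _ => g)) := by
  set N := Matrix.fromBlocks A (Matrix.of fun p (_ : Unit) => B p)
      (Matrix.of fun (_ : Unit) p => D p) (Matrix.of fun (_ : Unit) (_ : Unit) => f) with hNdef
  set P := Matrix.fromBlocks A (Matrix.of fun p (_ : Unit) => B p)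
      (Matrix.of fun (_ : Unit) p => E p) (Matrix.of fun (_ : Unit) (_ : Unit) => h) with hPdef
  set dR : Fin n ⊕ Unit → R := Sum.elim D fun _ => f with hdR
  set eR : Fin n ⊕ Unit → R := Sum.elim E fun _ => h with heR
  set u : Fin n ⊕ Unit → R := Sum.elim C fun _ => g with hu
  set v : Fin n ⊕ Unit → R := Sum.elim C fun _ => i with hv
  set ev : Fin n ⊕ Unit → R := Sum.elim (fun _ => 0) fun _ => (1 : R) with hev
  rw [Matrix.dotProduct_mulVec, Matrix.dotProduct_mulVec, Matrix.dotProduct_mulVec]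
  set x : Fin n ⊕ Unit → R := dR ᵥ* Pinv with hx
  set y : Fin n ⊕ Unit → R := eR ᵥ* Ninv with hy
  set c : R := x (Sum.inr ()) with hc
  have hrowN : ∀ k, N (Sum.inr ()) k = dR k := by
    rintro (p | ⟨⟩) <;> simp [hNdef, hdR]
  have hrowP : ∀ k, P (Sum.inr ()) k = eR k := by
    rintro (p | ⟨⟩) <;> simp [hPdef, heR]
  have hone : ∀ k, (1 : Matrix (Fin n ⊕ Unit) (Fin n ⊕ Unit) R) (Sum.inr ()) k = ev k := by
    rintro (p | ⟨⟩) <;> simp [Matrix.one_apply, hev]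
  have hdN : dR ᵥ* Ninv = ev := by
    funext k
    have h1 := congrFun (congrFun hNl (Sum.inr ())) k
    rw [Matrix.mul_apply] at h1
    rw [← hone k, ← h1]
    simp [Matrix.vecMul, dotProduct, hrowN]
  have hxP : x ᵥ* P = dR := by
    rw [hx, Matrix.vecMul_vecMul, hPr, Matrix.vecMul_one]
  have hcd : x (Sum.inr (default : Unit)) = c := rfl
  have hxN : x ᵥ* N = fun k => dR k + c * (dR k - eR k) := by
    funext k
    have hP := congrFun hxP k
    have htop : ∀ p : Fin n, N (Sum.inl p) k = P (Sum.inl p) k := by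
      rintro p
      rcases k with q | ⟨⟩ <;> simp [hNdef, hPdef]
    simp only [Matrix.vecMul, dotProduct, Fintype.sum_sum_type,
      Fintype.sum_unique] at hP ⊢
    simp only [hrowP, hcd] at hP
    simp only [htop, hrowN, hrowP, hcd, mul_sub]
    rw [← hP]
    abel
  have hxeq : x = fun k => ev k + c * (ev k - y k) := by
    have hthis : x = (x ᵥ* N) ᵥ* Ninv := by
      rw [Matrix.vecMul_vecMul, hNl, Matrix.vecMul_one]
    rw [hthis, hxN]
    funext k
    rw [← congrFun hdN k, hy]
    simp only [Matrix.vecMul, dotProduct, Fintype.sum_sum_type,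
      Fintype.sum_unique, add_mul, sub_mul, mul_add, mul_sub, mul_assoc,
      Finset.sum_add_distrib, Finset.sum_sub_distrib, Finset.mul_sum]
    try abel
  have hxe : x ⬝ᵥ ev = c := by
    simp [dotProduct, Fintype.sum_sum_type, hev, hc]
  have hevu : ev ⬝ᵥ u = g := by
    simp [dotProduct, Fintype.sum_sum_type, hev, hu]
  have hxu : x ⬝ᵥ u = g + c * (g - y ⬝ᵥ u) := by
    calc x ⬝ᵥ u = (fun k => ev k + c * (ev k - y k)) ⬝ᵥ u := by rw [← hxeq]
      _ = ev ⬝ᵥ u + c * (ev ⬝ᵥ u - y ⬝ᵥ u) := by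
          simp only [dotProduct, add_mul, sub_mul, mul_assoc, mul_sub,
            Finset.mul_sum, Finset.sum_add_distrib, Finset.sum_sub_distrib]
      _ = g + c * (g - y ⬝ᵥ u) := by rw [hevu]
  have hvu : ∀ k, v k = u k + ev k * (i - g) := by
    rintro (p | ⟨⟩) <;> simp [hv, hu, hev]
  have hxv : x ⬝ᵥ v = x ⬝ᵥ u + c * (i - g) := by
    calc x ⬝ᵥ v = x ⬝ᵥ (fun k => u k + ev k * (i - g)) := by
          congr 1; funext k; exact hvu k
      _ = x ⬝ᵥ u + (x ⬝ᵥ ev) * (i - g) := by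
          simp only [dotProduct, mul_add, Finset.sum_add_distrib,
            Finset.sum_mul, mul_assoc]
      _ = x ⬝ᵥ u + c * (i - g) := by rw [hxe]
  rw [hxv, hxu, hxe]
  noncomm_ring
end

section
/- (Quasi-Plücker coordinates are independent of the column index.) Let A_I be an (n−1)×n matrix over R and let a, b be row n-vectors over R. For a column index s, let M_s denote the (n−1)×(n−1) matrix obtained from A_I by deleting its s-th column, and define the quasideterminants p_s(a) = a_s − (a with s-th entry deleted)·M_s⁻¹·(s-th column of A_I), and p_s(b) analogously. Let B denote the n×n matrix obtained by stacking A_I on top of the row b, and let e be the column n-vector with 1 in the last position and 0 elsewhere. If B is invertible and, for two column indices s and s', the matrices M_s, M_{s'} are invertible and p_s(b), p_{s'}(b) are invertible in R, then p_s(a)·p_s(b)⁻¹ = p_{s'}(a)·p_{s'}(b)⁻¹ = a · B⁻¹ · e. -/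
/-- The quasi-Plücker coordinate of the row `v` relative to the `n × (n+1)`
matrix `A`, built from the column index `s` using a given inverse `Minv` of
the square matrix obtained from `A` by deleting its `s`-th column. -/
def pcoord {R : Type*} [Ring R] {n : ℕ} (A : Matrix (Fin n) (Fin (n + 1)) R)
    (Minv : Matrix (Fin n) (Fin n) R) (v : Fin (n + 1) → R) (s : Fin (n + 1)) : R :=
  v s - ∑ j : Fin n, ∑ i : Fin n, v (s.succAbove j) * Minv j i * A i s

lemma pcoord_aux {R : Type*} [Ring R] {n : ℕ} (A : Matrix (Fin n) (Fin (n + 1)) R)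
    (c : Fin (n + 1) → R) (s : Fin (n + 1)) (Minv : Matrix (Fin n) (Fin n) R)
    (hMr : Minv * A.submatrix id s.succAbove = 1)
    (hA : ∀ i, ∑ q, A i q * c q = 0) (v : Fin (n + 1) → R) :
    ∑ q, v q * c q =
      pcoord A Minv v s * c s := by
  unfold pcoord
  have h1 : ∀ i, ∑ k, A.submatrix id s.succAbove i k * c (s.succAbove k) = -(A i s * c s) := by
    intro i
    have h := hA i
    rw [Fin.sum_univ_succAbove (fun q => A i q * c q) s] at h
    simpa [Matrix.submatrix_apply] using eq_neg_of_add_eq_zero_right h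
  have hv : (A.submatrix id s.succAbove).mulVec (fun k => c (s.succAbove k))
      = fun i => -(A i s * c s) := by
    funext i
    simpa [Matrix.mulVec, dotProduct] using h1 i
  have h2 := congrArg Minv.mulVec hv
  rw [Matrix.mulVec_mulVec, hMr, Matrix.one_mulVec] at h2
  have hw : ∀ j, c (s.succAbove j) = ∑ i, Minv j i * -(A i s * c s) := by
    intro j
    have := congrFun h2 j
    simpa [Matrix.mulVec, dotProduct] using this
  rw [Fin.sum_univ_succAbove (fun q => v q * c q) s, sub_mul, Finset.sum_mul]
  simp only [hw, Finset.mul_sum, Finset.sum_mul, mul_neg, mul_assoc,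
    Finset.sum_neg_distrib, sub_eq_add_neg]

/-- Quasi-Plücker coordinates are independent of the choice of the column
index: `p_s(a)·p_s(b)⁻¹ = p_{s'}(a)·p_{s'}(b)⁻¹ = a·B⁻¹·e`. -/
theorem stmt_11 {R : Type*} [Ring R] (n : ℕ)
    (A : Matrix (Fin n) (Fin (n + 1)) R) (a b : Fin (n + 1) → R)
    (B : Matrix (Fin (n + 1)) (Fin (n + 1)) R)
    (hB : ∀ (p q : Fin (n + 1)), B p q = Fin.lastCases (b q) (fun i => A i q) p)
    (Binv : Matrix (Fin (n + 1)) (Fin (n + 1)) R)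
    (hBl : B * Binv = 1) (hBr : Binv * B = 1)
    (s s' : Fin (n + 1))
    (Msinv Ms'inv : Matrix (Fin n) (Fin n) R)
    (hMsl : A.submatrix id s.succAbove * Msinv = 1)
    (hMsr : Msinv * A.submatrix id s.succAbove = 1)
    (hMs'l : A.submatrix id s'.succAbove * Ms'inv = 1)
    (hMs'r : Ms'inv * A.submatrix id s'.succAbove = 1)
    (u u' : R)
    (hul : pcoord A Msinv b s * u = 1) (hur : u * pcoord A Msinv b s = 1)
    (hu'l : pcoord A Ms'inv b s' * u' = 1) (hu'r : u' * pcoord A Ms'inv b s' = 1) :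
    pcoord A Msinv a s * u = pcoord A Ms'inv a s' * u'
      ∧ pcoord A Msinv a s * u
        = dotProduct a
            (Binv.mulVec fun p => if p = Fin.last n then (1 : R) else 0) := by
  set e : Fin (n + 1) → R := fun p => if p = Fin.last n then (1 : R) else 0 with he
  set c : Fin (n + 1) → R := Binv.mulVec e with hc
  have hBc : B.mulVec c = e := by
    rw [hc, Matrix.mulVec_mulVec, hBl, Matrix.one_mulVec]
  have hA : ∀ i : Fin n, ∑ q, A i q * c q = 0 := by
    intro i
    have h := congrFun hBc i.castSucc
    have hne : (i.castSucc : Fin (n + 1)) ≠ Fin.last n := (Fin.castSucc_lt_last i).ne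
    simpa [Matrix.mulVec, dotProduct, hB, hne, he] using h
  have hb : ∑ q, b q * c q = 1 := by
    have h := congrFun hBc (Fin.last n)
    simpa [Matrix.mulVec, dotProduct, hB, he] using h
  -- general fact for any valid column index
  have key : ∀ (t : Fin (n + 1)) (Mtinv : Matrix (Fin n) (Fin n) R)
      (_ : Mtinv * A.submatrix id t.succAbove = 1) (w : R)
      (_ : w * pcoord A Mtinv b t = 1),
      pcoord A Mtinv a t * w = ∑ q, a q * c q := by
    intro t Mtinv hMtr w hwr
    have hbt : pcoord A Mtinv b t * c t = 1 := by
      rw [← pcoord_aux A c t Mtinv hMtr hA b]; exact hb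
    have hct : c t = w := by
      calc c t = (w * pcoord A Mtinv b t) * c t := by rw [hwr, one_mul]
        _ = w * (pcoord A Mtinv b t * c t) := by rw [mul_assoc]
        _ = w := by rw [hbt, mul_one]
    rw [← hct, ← pcoord_aux A c t Mtinv hMtr hA a]
  have h1 := key s Msinv hMsr u hur
  have h2 := key s' Ms'inv hMs'r u' hu'r
  refine ⟨h1.trans h2.symm, h1.trans ?_⟩
  rw [dotProduct]
end

section
/- Let K be a field, let M be an n×n matrix over K with n ≥ 2, fix indices i, j, and suppose the (n−1)×(n−1) submatrix M^{i,j} obtained by deleting row i and column j has nonzero determinant. Then the quasideterminant of M about the (i,j) entry satisfies m_{i,j} − r_i^j · (M^{i,j})⁻¹ · c_j^i = (−1)^{i+j} · det(M) / det(M^{i,j}), where r_i^j is row i of M with the j-th entry deleted and c_j^i is column j of M with the i-th entry deleted (and i, j are counted from 1). -/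
open Matrix Equiv

/-- Over a field, the quasideterminant about the `(i,j)` entry is the signed
ratio of determinants `(-1)^(i+j) det M / det M^{i,j}`.  (Here rows and columns
are indexed from `0`; the sign `(-1)^(i+j)` agrees with the `1`-based one.) -/
theorem stmt_12 {K : Type*} [Field K] (n : ℕ) (hn : 1 ≤ n)
    (M : Matrix (Fin (n + 1)) (Fin (n + 1)) K) (i j : Fin (n + 1))
    (hdet : (M.submatrix i.succAbove j.succAbove).det ≠ 0) :
    M i j - ∑ p : Fin n, ∑ q : Fin n,
        M i (j.succAbove p) * (M.submatrix i.succAbove j.succAbove)⁻¹ p q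
          * M (i.succAbove q) j
      = (-1 : K) ^ ((i : ℕ) + (j : ℕ)) * M.det
          / (M.submatrix i.succAbove j.succAbove).det := by
  set A := M.submatrix i.succAbove j.succAbove with hA
  haveI : Invertible A := A.invertibleOfIsUnitDet (isUnit_iff_ne_zero.mpr hdet)
  have hinv : ⅟A = A⁻¹ := invOf_eq_nonsing_inv A
  -- reindexing equivalence
  let e : Fin 1 ⊕ Fin n ≃ Fin (n + 1) := finSumFinEquiv.trans (finCongr (Nat.add_comm 1 n))
  have he0 : ∀ p : Fin 1, e (Sum.inl p) = 0 := by
    intro p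
    fin_cases p
    rfl
  have heS : ∀ p : Fin n, e (Sum.inr p) = p.succ := by
    intro p
    apply Fin.ext
    simp [e, Nat.add_comm]
  -- the permuted matrix
  set N := M.submatrix (i.cycleRange.symm : Fin (n+1) → Fin (n+1))
      (j.cycleRange.symm : Fin (n+1) → Fin (n+1)) with hN
  set D : Matrix (Fin 1) (Fin 1) K := Matrix.of fun _ _ => M i j with hD
  set B : Matrix (Fin 1) (Fin n) K := Matrix.of fun _ q => M i (j.succAbove q) with hB
  set C : Matrix (Fin n) (Fin 1) K := Matrix.of fun p _ => M (i.succAbove p) j with hC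
  have hblock : N.submatrix e e = Matrix.fromBlocks D B C A := by
    ext p q
    cases p with
    | inl p =>
      cases q with
      | inl q => simp [N, he0, Fin.cycleRange_symm_zero, D]
      | inr q => simp [N, he0, heS, Fin.cycleRange_symm_zero, Fin.cycleRange_symm_succ, B]
    | inr p =>
      cases q with
      | inl q => simp [N, he0, heS, Fin.cycleRange_symm_zero, Fin.cycleRange_symm_succ, C]
      | inr q => simp [N, heS, hA, Fin.cycleRange_symm_succ]
  have hdetN : N.det = A.det * (M i j - ∑ p : Fin n, ∑ q : Fin n,
      M i (j.succAbove p) * A⁻¹ p q * M (i.succAbove q) j) := by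
    rw [← Matrix.det_submatrix_equiv_self e N, hblock, Matrix.det_fromBlocks₂₂, hinv]
    congr 1
    rw [Matrix.det_fin_one]
    simp only [Matrix.sub_apply, Matrix.mul_apply, D, B, C, Matrix.of_apply, Finset.sum_mul]
    rw [Finset.sum_comm]
  have hdetN' : N.det = (-1 : K) ^ ((i : ℕ) + (j : ℕ)) * M.det := by
    have : N = (M.submatrix (i.cycleRange.symm : Perm (Fin (n+1))) id).submatrix
        id (j.cycleRange.symm : Perm (Fin (n+1))) := rfl
    rw [this, Matrix.det_permute', Matrix.det_permute]
    simp only [Perm.sign_symm, Fin.sign_cycleRange]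
    push_cast
    rw [pow_add]
    ring
  rw [eq_div_iff hdet, sub_mul, ← hdetN', hdetN]
  ring
end

section
/- (Darboux transformation for the non-Abelian Hirota–Miwa Lax pair.) Let φ, θ : ℤ³ → R and U_{ij} : ℤ³ → R (for distinct i, j ∈ {1,2,3}), let a₁, a₂, a₃ be nonzero real scalars, and let T_i denote the shift by 1 in the i-th discrete variable. Assume that for all distinct i, j and at every lattice point: a_i⁻¹·T_i(φ) − a_j⁻¹·T_j(φ) = U_{ij}·φ and a_i⁻¹·T_i(θ) − a_j⁻¹·T_j(θ) = U_{ij}·θ, and that every value of θ is invertible in R. Define φ̃^{(i)} = a_i⁻¹·( T_i(φ) − T_i(θ)·θ⁻¹·φ ) and Ũ_{ij} = T_j( T_i(θ)·θ⁻¹ )·U_{ij}·θ·T_i(θ)⁻¹. Then φ̃^{(1)} = φ̃^{(2)} = φ̃^{(3)} =: φ̃ at every lattice point, and φ̃ satisfies the transformed Lax pair a_i⁻¹·T_i(φ̃) − a_j⁻¹·T_j(φ̃) = Ũ_{ij}·φ̃ for all distinct i, j. -/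
private lemma aux1_s17 {R : Type*} [Ring R] [Algebra ℝ R] (ai aj : ℝ)
    (F Fi Fj G Gi Gj vG u : R)
    (hG : G * vG = 1)
    (hF : ai • Fi - aj • Fj = u * F)
    (hGθ : ai • Gi - aj • Gj = u * G) :
    ai • (Fi - Gi * vG * F) = aj • (Fj - Gj * vG * F) := by
  have key : u * F = ai • (Gi * (vG * F)) - aj • (Gj * (vG * F)) := by
    have : u * F = (u * G) * (vG * F) := by
      rw [mul_assoc, ← mul_assoc G vG F, hG, one_mul]
    rw [this, ← hGθ, sub_mul, smul_mul_assoc, smul_mul_assoc]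
  have h2 : ai • Fi - aj • Fj = ai • (Gi * (vG * F)) - aj • (Gj * (vG * F)) := by
    rw [hF, key]
  simp only [smul_sub, ← mul_assoc]
  have h3 : ai • Fi - ai • (Gi * vG * F) = aj • Fj - aj • (Gj * vG * F) := by
    simp only [mul_assoc]
    linear_combination (norm := module) h2
  exact h3

private lemma aux2_s17 {R : Type*} [Ring R] [Algebra ℝ R] (ai aj : ℝ)
    (F Fi Fj Fij G Gi Gj Gij vG vGi vGj u : R)
    (hGi : Gi * vGi = 1) (hGi' : vGi * Gi = 1)
    (hGj' : vGj * Gj = 1)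
    (hG : G * vG = 1)
    (hF : ai • Fi - aj • Fj = u * F)
    (hGθ : ai • Gi - aj • Gj = u * G) :
    ai • (aj • (Fij - Gij * vGi * Fi)) - aj • (ai • (Fij - Gij * vGj * Fj))
      = Gij * vGj * u * (G * vGi) * (ai • (Fi - Gi * vG * F)) := by
  have e1 : ∀ x : R, Gi * (vGi * x) = x := fun x => by rw [← mul_assoc, hGi, one_mul]
  have e2 : ∀ x : R, vGi * (Gi * x) = x := fun x => by rw [← mul_assoc, hGi', one_mul]
  have e5 : ∀ x : R, G * (vG * x) = x := fun x => by rw [← mul_assoc, hG, one_mul]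
  have hXG : Gij * (vGj * (u * G)) = ai • (Gij * (vGj * Gi)) - aj • Gij := by
    rw [← hGθ]
    simp only [mul_sub, mul_smul_comm, ← mul_assoc vGj Gj, hGj', one_mul, mul_one]
  have hXF : Gij * (vGj * (u * F)) = ai • (Gij * (vGj * Fi)) - aj • (Gij * (vGj * Fj)) := by
    rw [← hF]
    simp only [mul_sub, mul_smul_comm]
  have step : Gij * vGj * u * (G * vGi) * (ai • (Fi - Gi * vG * F))
      = ai • (Gij * (vGj * (u * (G * (vGi * Fi))))) - ai • (Gij * (vGj * (u * F))) := by
    simp only [mul_smul_comm, smul_sub, mul_sub, mul_assoc, e2, e5]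
  have reassoc : Gij * (vGj * (u * (G * (vGi * Fi)))) = Gij * (vGj * (u * G)) * (vGi * Fi) := by
    simp only [mul_assoc]
  have expand : Gij * (vGj * (u * G)) * (vGi * Fi)
      = ai • (Gij * (vGj * Fi)) - aj • (Gij * (vGi * Fi)) := by
    rw [hXG, sub_mul, smul_mul_assoc, smul_mul_assoc]
    simp only [mul_assoc, e1]
  rw [step, reassoc, expand, hXF]
  simp only [smul_sub, mul_assoc]
  module
/-- Darboux transformation for the non-Abelian Hirota–Miwa Lax pair:
the three expressions `φ̃^{(i)}` coincide and the common value satisfies the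
Lax pair with the transformed potentials `Ũ_{ij}`. -/
theorem stmt_17 {R : Type*} [Ring R] [Algebra ℝ R]
    (a : Fin 3 → ℝ) (ha : ∀ i, a i ≠ 0)
    (φ θ : (Fin 3 → ℤ) → R) (U : Fin 3 → Fin 3 → (Fin 3 → ℤ) → R)
    (shift : Fin 3 → (Fin 3 → ℤ) → (Fin 3 → ℤ))
    (hshift : ∀ (i : Fin 3) (p : Fin 3 → ℤ), shift i p = Function.update p i (p i + 1))
    (hφ : ∀ i j : Fin 3, i ≠ j → ∀ p : Fin 3 → ℤ,
      (a i)⁻¹ • φ (shift i p) - (a j)⁻¹ • φ (shift j p) = U i j p * φ p)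
    (hθ : ∀ i j : Fin 3, i ≠ j → ∀ p : Fin 3 → ℤ,
      (a i)⁻¹ • θ (shift i p) - (a j)⁻¹ • θ (shift j p) = U i j p * θ p)
    (hθinv : ∀ p : Fin 3 → ℤ, IsUnit (θ p))
    (φt : Fin 3 → (Fin 3 → ℤ) → R)
    (hφt : ∀ (i : Fin 3) (p : Fin 3 → ℤ),
      φt i p = (a i)⁻¹ • (φ (shift i p) - θ (shift i p) * Ring.inverse (θ p) * φ p))
    (Ut : Fin 3 → Fin 3 → (Fin 3 → ℤ) → R)
    (hUt : ∀ (i j : Fin 3) (p : Fin 3 → ℤ),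
      Ut i j p = θ (shift j (shift i p)) * Ring.inverse (θ (shift j p)) * U i j p
        * (θ p * Ring.inverse (θ (shift i p)))) :
    (∀ (i j : Fin 3) (p : Fin 3 → ℤ), φt i p = φt j p)
      ∧ ∀ i j : Fin 3, i ≠ j → ∀ p : Fin 3 → ℤ,
        (a i)⁻¹ • φt 0 (shift i p) - (a j)⁻¹ • φt 0 (shift j p)
          = Ut i j p * φt 0 p := by
  have key : ∀ (i j : Fin 3) (p : Fin 3 → ℤ), φt i p = φt j p := by
    intro i j p
    by_cases hij : i = j
    · rw [hij]
    · rw [hφt, hφt]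
      exact aux1_s17 (a i)⁻¹ (a j)⁻¹ (φ p) (φ (shift i p)) (φ (shift j p)) (θ p)
        (θ (shift i p)) (θ (shift j p)) (Ring.inverse (θ p)) (U i j p)
        (Ring.mul_inverse_cancel _ (hθinv p)) (hφ i j hij p) (hθ i j hij p)
  refine ⟨key, ?_⟩
  intro i j hij p
  have comm : shift i (shift j p) = shift j (shift i p) := by
    simp only [hshift]
    rw [Function.update_of_ne hij, Function.update_of_ne hij.symm,
      Function.update_comm hij]
  rw [key 0 j (shift i p), key 0 i (shift j p), key 0 i p, hφt, hφt, hφt, hUt, comm]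
  exact aux2_s17 (a i)⁻¹ (a j)⁻¹ (φ p) (φ (shift i p)) (φ (shift j p))
    (φ (shift j (shift i p))) (θ p) (θ (shift i p)) (θ (shift j p))
    (θ (shift j (shift i p))) (Ring.inverse (θ p)) (Ring.inverse (θ (shift i p)))
    (Ring.inverse (θ (shift j p))) (U i j p)
    (Ring.mul_inverse_cancel _ (hθinv _)) (Ring.inverse_mul_cancel _ (hθinv _))
    (Ring.inverse_mul_cancel _ (hθinv _)) (Ring.mul_inverse_cancel _ (hθinv _))
    (hφ i j hij p) (hθ i j hij p)
end

section
/- Let τ_n : ℝ² → ℝ (n ∈ ℤ) be nowhere-vanishing functions satisfying the bilinear q-2DTL equation (δ_{q^α,x}δ_{q^β,y}τ_n)(x,y)·τ_n(x,y) − (δ_{q^α,x}τ_n)(x,y)·(δ_{q^β,y}τ_n)(x,y) = τ_{n+1}(x, q^β y)·τ_{n−1}(q^α x, y) − τ_n(q^α x, q^β y)·τ_n(x,y) for all n ∈ ℤ and all x ≠ 0, y ≠ 0. Then X_n := τ_n / τ_{n−1} satisfies the (scalar) noncommutative q-2DTL equation δ_{q^β,y}( (δ_{q^α,x}X_n)·X_n⁻¹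 ) = X_{n+1}(x, q^β y)·X_n(x,y)⁻¹ − X_n(q^α x, q^β y)·X_{n−1}(q^α x, y)⁻¹ for all n ∈ ℤ and all x ≠ 0, y ≠ 0. -/
/-- The q-difference operator in `x` on real-valued functions. -/
noncomputable def rqdX (q α : ℝ) (f : ℝ → ℝ → ℝ) (x y : ℝ) : ℝ :=
  (f x y - f (q ^ α * x) y) / ((1 - q) * x)

/-- The q-difference operator in `y` on real-valued functions. -/
noncomputable def rqdY (q β : ℝ) (f : ℝ → ℝ → ℝ) (x y : ℝ) : ℝ :=
  (f x y - f x (q ^ β * y)) / ((1 - q) * y)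

/-- If `τ_n` are nowhere vanishing solutions of the bilinear q-2DTL equation,
then `X_n = τ_n/τ_{n-1}` solves the (scalar) noncommutative q-2DTL equation. -/
theorem stmt_18 (q α β : ℝ) (hq : 0 < q) (hq1 : q ≠ 1)
    (τ : ℤ → ℝ → ℝ → ℝ)
    (hτ0 : ∀ (n : ℤ) (x y : ℝ), τ n x y ≠ 0)
    (hbil : ∀ (n : ℤ) (x y : ℝ), x ≠ 0 → y ≠ 0 →
      rqdX q α (fun u v => rqdY q β (τ n) u v) x y * τ n x y
          - rqdX q α (τ n) x y * rqdY q β (τ n) x y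
        = τ (n + 1) x (q ^ β * y) * τ (n - 1) (q ^ α * x) y
          - τ n (q ^ α * x) (q ^ β * y) * τ n x y)
    (X : ℤ → ℝ → ℝ → ℝ)
    (hX : ∀ (n : ℤ) (x y : ℝ), X n x y = τ n x y / τ (n - 1) x y) :
    ∀ (n : ℤ) (x y : ℝ), x ≠ 0 → y ≠ 0 →
      rqdY q β (fun u v => rqdX q α (X n) u v * (X n u v)⁻¹) x y
        = X (n + 1) x (q ^ β * y) * (X n x y)⁻¹
          - X n (q ^ α * x) (q ^ β * y) * (X (n - 1) (q ^ α * x) y)⁻¹ := by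
  intro n x y hx hy
  have hq' : (1 : ℝ) - q ≠ 0 := sub_ne_zero_of_ne hq1.symm
  have hK : ((1 - q) * x) * ((1 - q) * y) ≠ 0 :=
    mul_ne_zero (mul_ne_zero hq' hx) (mul_ne_zero hq' hy)
  have h1 := hbil n x y hx hy
  have h2 := hbil (n - 1) x y hx hy
  simp only [rqdX, rqdY, sub_add_cancel] at h1 h2
  field_simp at h1 h2
  -- clean Hirota forms
  have h1' : τ n x y * τ n (q ^ α * x) (q ^ β * y) - τ n (q ^ α * x) y * τ n x (q ^ β * y)
      = ((1 - q) * x) * ((1 - q) * y) *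
        (τ (n + 1) x (q ^ β * y) * τ (n - 1) (q ^ α * x) y
          - τ n (q ^ α * x) (q ^ β * y) * τ n x y) := by
    apply mul_left_cancel₀ hK
    linear_combination ((1 - q) * x * ((1 - q) * y)) * h1
  have h2' : τ (n - 1) x y * τ (n - 1) (q ^ α * x) (q ^ β * y)
        - τ (n - 1) (q ^ α * x) y * τ (n - 1) x (q ^ β * y)
      = ((1 - q) * x) * ((1 - q) * y) *
        (τ n x (q ^ β * y) * τ (n - 1 - 1) (q ^ α * x) y
          - τ (n - 1) (q ^ α * x) (q ^ β * y) * τ (n - 1) x y) := by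
    apply mul_left_cancel₀ hK
    linear_combination ((1 - q) * x * ((1 - q) * y)) * h2
  have ha := hτ0 n x y
  have ha1 := hτ0 n (q ^ α * x) y
  have ha2 := hτ0 n x (q ^ β * y)
  have ha12 := hτ0 n (q ^ α * x) (q ^ β * y)
  have hb := hτ0 (n - 1) x y
  have hb1 := hτ0 (n - 1) (q ^ α * x) y
  have hb2 := hτ0 (n - 1) x (q ^ β * y)
  have hb12 := hτ0 (n - 1) (q ^ α * x) (q ^ β * y)
  simp only [rqdX, rqdY, hX, add_sub_cancel_right]
  field_simp
  linear_combination
    (τ (n - 1) x y * τ (n - 1) (q ^ α * x) (q ^ β * y) * h1'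
      - τ n (q ^ α * x) (q ^ β * y) * τ n x y * h2')
end

section
/- (Darboux transformation for the noncommutative KP Lax pair.) Let v, θ, φ ∈ R with θ invertible, and suppose θ and φ both satisfy the noncommutative KP Lax pair: ∂_x²(ψ) + ∂_x(v)·ψ − ∂_y(ψ) = 0 and 4∂_x³(ψ) + 6∂_x(v)·∂_x(ψ) + 3∂_x²(v)·ψ + 3∂_y(v)·ψ + ∂_t(ψ) = 0 (for ψ = θ and ψ = φ). Define φ̃ = ∂_x(φ) − ∂_x(θ)·θ⁻¹·φ and ṽ = v + 2∂_x(θ)·θ⁻¹. Then φ̃ satisfies the same Lax pair with v replaced by ṽ: ∂_x²(φ̃) + ∂_x(ṽ)·φ̃ − ∂_y(φ̃) = 0 and 4∂_x³(φ̃) + 6∂_x(ṽ)·∂_x(φ̃) + 3∂_x²(ṽ)·φ̃ + 3∂_y(ṽ)·φ̃ + ∂_t(φ̃) = 0. -/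
section AuxDarboux
variable {R : Type*} [Ring R] (D : R → R)

theorem aux_dzero' (hadd : ∀ a b : R, D (a + b) = D a + D b) : D 0 = 0 := by
  have h := hadd 0 0
  simpa using h

theorem aux_dneg' (hadd : ∀ a b : R, D (a + b) = D a + D b) (a : R) : D (-a) = -D a := by
  have h := hadd a (-a)
  rw [add_neg_cancel, aux_dzero' D hadd] at h
  exact eq_neg_of_add_eq_zero_right h.symm

theorem aux_dsub' (hadd : ∀ a b : R, D (a + b) = D a + D b) (a b : R) :
    D (a - b) = D a - D b := by
  rw [sub_eq_add_neg, hadd, aux_dneg' D hadd, sub_eq_add_neg]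

theorem aux_done' (hmul : ∀ a b : R, D (a * b) = D a * b + a * D b) : D 1 = 0 := by
  have h := hmul 1 1
  simpa using h

theorem aux_dtwo' (hadd : ∀ a b : R, D (a + b) = D a + D b)
    (hmul : ∀ a b : R, D (a * b) = D a * b + a * D b) : D (2 : R) = 0 := by
  rw [show (2:R) = 1 + 1 by norm_num, hadd, aux_done' D hmul, add_zero]

theorem aux_dinv' (hmul : ∀ a b : R, D (a * b) = D a * b + a * D b)
    (θ w : R) (hwθ : w * θ = 1) (hθw : θ * w = 1) :
    D w = -(w * (D θ * w)) := by
  have h0 : D w * θ + w * D θ = 0 := by rw [← hmul, hwθ, aux_done' D hmul]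
  have h1 : D w * θ = -(w * D θ) := eq_neg_of_add_eq_zero_left h0
  calc D w = D w * (θ * w) := by rw [hθw, mul_one]
    _ = (D w * θ) * w := by rw [mul_assoc]
    _ = -(w * (D θ * w)) := by rw [h1]; noncomm_ring

end AuxDarboux

/-- Darboux transformation for the noncommutative KP Lax pair: if `θ`, `φ` are
eigenfunctions then `φ̃ = ∂ₓφ - ∂ₓθ·θ⁻¹·φ` is an eigenfunction for the
transformed potential `ṽ = v + 2∂ₓθ·θ⁻¹`. -/
theorem stmt_19 {R : Type*} [Ring R] [Algebra ℚ R]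
    (Dx Dy Dt : R → R)
    (hDxadd : ∀ a b : R, Dx (a + b) = Dx a + Dx b)
    (hDyadd : ∀ a b : R, Dy (a + b) = Dy a + Dy b)
    (hDtadd : ∀ a b : R, Dt (a + b) = Dt a + Dt b)
    (hDxmul : ∀ a b : R, Dx (a * b) = Dx a * b + a * Dx b)
    (hDymul : ∀ a b : R, Dy (a * b) = Dy a * b + a * Dy b)
    (hDtmul : ∀ a b : R, Dt (a * b) = Dt a * b + a * Dt b)
    (hxy : ∀ a : R, Dx (Dy a) = Dy (Dx a))
    (hxt : ∀ a : R, Dx (Dt a) = Dt (Dx a))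
    (hyt : ∀ a : R, Dy (Dt a) = Dt (Dy a))
    (v θ φ : R) (hθ : IsUnit θ)
    (hθ1 : Dx (Dx θ) + Dx v * θ - Dy θ = 0)
    (hθ2 : 4 * Dx (Dx (Dx θ)) + 6 * (Dx v * Dx θ) + 3 * (Dx (Dx v) * θ)
      + 3 * (Dy v * θ) + Dt θ = 0)
    (hφ1 : Dx (Dx φ) + Dx v * φ - Dy φ = 0)
    (hφ2 : 4 * Dx (Dx (Dx φ)) + 6 * (Dx v * Dx φ) + 3 * (Dx (Dx v) * φ)
      + 3 * (Dy v * φ) + Dt φ = 0)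
    (φt vt : R)
    (hφt : φt = Dx φ - Dx θ * Ring.inverse θ * φ)
    (hvt : vt = v + 2 * (Dx θ * Ring.inverse θ)) :
    Dx (Dx φt) + Dx vt * φt - Dy φt = 0
      ∧ 4 * Dx (Dx (Dx φt)) + 6 * (Dx vt * Dx φt) + 3 * (Dx (Dx vt) * φt)
        + 3 * (Dy vt * φt) + Dt φt = 0 := by
  subst hφt hvt
  set w : R := Ring.inverse θ with hwdef
  have hwθ : w * θ = 1 := Ring.inverse_mul_cancel θ hθ
  have hθw : θ * w = 1 := Ring.mul_inverse_cancel θ hθ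
  -- reorient mixed partials
  have hyx : ∀ a : R, Dy (Dx a) = Dx (Dy a) := fun a => (hxy a).symm
  have htx : ∀ a : R, Dt (Dx a) = Dx (Dt a) := fun a => (hxt a).symm
  have hty : ∀ a : R, Dt (Dy a) = Dy (Dt a) := fun a => (hyt a).symm
  -- solve the Lax equations for y/t derivatives
  have hDyθ : Dy θ = Dx (Dx θ) + Dx v * θ := (sub_eq_zero.mp hθ1).symm
  have hDyφ : Dy φ = Dx (Dx φ) + Dx v * φ := (sub_eq_zero.mp hφ1).symm
  have hDtθ : Dt θ = -(4 * Dx (Dx (Dx θ)) + 6 * (Dx v * Dx θ) + 3 * (Dx (Dx v) * θ)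
      + 3 * (Dy v * θ)) := eq_neg_of_add_eq_zero_right hθ2
  have hDtφ : Dt φ = -(4 * Dx (Dx (Dx φ)) + 6 * (Dx v * Dx φ) + 3 * (Dx (Dx v) * φ)
      + 3 * (Dy v * φ)) := eq_neg_of_add_eq_zero_right hφ2
  -- derivatives of the inverse
  have hDxw : Dx w = -(w * (Dx θ * w)) := aux_dinv' Dx hDxmul θ w hwθ hθw
  have hDyw : Dy w = -(w * (Dy θ * w)) := aux_dinv' Dy hDymul θ w hwθ hθw
  have hDtw : Dt w = -(w * (Dt θ * w)) := aux_dinv' Dt hDtmul θ w hwθ hθw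
  -- numerals are constants
  have h2x : Dx (2 : R) = 0 := aux_dtwo' Dx hDxadd hDxmul
  have h2y : Dy (2 : R) = 0 := aux_dtwo' Dy hDyadd hDymul
  have h3x : Dx (3 : R) = 0 := by
    rw [show (3:R) = 1 + 2 by norm_num, hDxadd, aux_done' Dx hDxmul, h2x, add_zero]
  have h4x : Dx (4 : R) = 0 := by
    rw [show (4:R) = 2 + 2 by norm_num, hDxadd, h2x, add_zero]
  have h6x : Dx (6 : R) = 0 := by
    rw [show (6:R) = 3 + 3 by norm_num, hDxadd, h3x, add_zero]
  have h3y : Dy (3 : R) = 0 := by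
    rw [show (3:R) = 1 + 2 by norm_num, hDyadd, aux_done' Dy hDymul, h2y, add_zero]
  -- subtraction rules
  have hsx := aux_dsub' Dx hDxadd
  have hsy := aux_dsub' Dy hDyadd
  have hst := aux_dsub' Dt hDtadd
  -- inverse cancellation in right-associated products
  have hc1 : ∀ a : R, θ * (w * a) = a := fun a => by rw [← mul_assoc, hθw, one_mul]
  have hc2 : ∀ a : R, w * (θ * a) = a := fun a => by rw [← mul_assoc, hwθ, one_mul]
  constructor
  · simp only [hsx, hsy, hst, hDxadd, hDyadd, hDtadd, hDxmul, hDymul, hDtmul,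
      hyx, htx, hty, hDyθ, hDyφ, hDtθ, hDtφ, hDxw, hDyw, hDtw, h2x, h2y, h3x, h4x, h6x, h3y,
      aux_dneg' Dx hDxadd, aux_dneg' Dy hDyadd, aux_dneg' Dt hDtadd,
      zero_mul, mul_zero, add_zero, zero_add]
    simp only [mul_add, add_mul, mul_sub, sub_mul, mul_neg, neg_mul, mul_assoc,
      sub_eq_add_neg, neg_add, neg_neg, mul_one, one_mul, hwθ, hθw, hc1, hc2]
    noncomm_ring
  · simp only [hsx, hsy, hst, hDxadd, hDyadd, hDtadd, hDxmul, hDymul, hDtmul,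
      hyx, htx, hty, hDyθ, hDyφ, hDtθ, hDtφ, hDxw, hDyw, hDtw, h2x, h2y, h3x, h4x, h6x, h3y,
      aux_dneg' Dx hDxadd, aux_dneg' Dy hDyadd, aux_dneg' Dt hDtadd,
      zero_mul, mul_zero, add_zero, zero_add]
    simp only [mul_add, add_mul, mul_sub, sub_mul, mul_neg, neg_mul, mul_assoc,
      sub_eq_add_neg, neg_add, neg_neg, mul_one, one_mul, hwθ, hθw, hc1, hc2]
    noncomm_ring
end
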